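/- arXiv:2602.06788 — 11 statements merged into one kernel-verified Lean document; each statement's English description precedes it below -/
import Mathlib

section
/- Let f : [0,∞) → ℝ be continuous on [0,∞) and continuously differentiable on (0,∞). Suppose that the ratio (f(t) − f(0))/t is not bounded from below in any right neighborhood of 0, i.e., for every a > 0 and every M ∈ ℝ there exists t ∈ (0,a) with (f(t) − f(0))/t < M. Then for every n ≥ 1, every r ∈ ℝⁿ, every q ∈ Δⁿ with qᵢ > 0 for all i, and every β > 0, every maximizer p of g(p) = Σᵢ rᵢ pᵢ − β Σᵢ qᵢ f(pᵢ/qᵢ) over Δⁿ satisfies pᵢ > 0 for all i ∈ {1,…,n}. -/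
open Finset

/-- The probability simplex Δⁿ in ℝⁿ (indexed by `Fin n`). -/
def simplex (n : ℕ) : Set (Fin n → ℝ) :=
  {p | (∀ i, 0 ≤ p i) ∧ ∑ i, p i = 1}

/-- The objective `g(p) = Σᵢ rᵢ pᵢ − β Σᵢ qᵢ f(pᵢ/qᵢ)`. -/
noncomputable def obj (n : ℕ) (r q : Fin n → ℝ) (β : ℝ) (f : ℝ → ℝ)
    (p : Fin n → ℝ) : ℝ :=
  (∑ i, r i * p i) - β * ∑ i, q i * f (p i / q i)

lemma sum_split {n : ℕ} (i j : Fin n) (h : i ≠ j) (H : Fin n → ℝ) :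
    ∑ k, H k = H i + H j + ∑ k ∈ univ \ ({i, j} : Finset (Fin n)), H k := by
  have := Finset.sum_sdiff (f := H) (Finset.subset_univ ({i, j} : Finset (Fin n)))
  rw [Finset.sum_pair h] at this
  linarith

/-- if the ratio `(f(t) − f(0))/t` is not bounded from below in any
right neighborhood of `0`, then every maximizer of `g` over the simplex has all
coordinates strictly positive. -/
theorem stmt1 (f : ℝ → ℝ)
    (hf_cont : ContinuousOn f (Set.Ici 0))
    (hf_diff : ∀ t ∈ Set.Ioi (0 : ℝ), DifferentiableAt ℝ f t)
    (hf_deriv_cont : ContinuousOn (deriv f) (Set.Ioi 0))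
    (hratio : ∀ a > (0 : ℝ), ∀ M : ℝ, ∃ t : ℝ, 0 < t ∧ t < a ∧ (f t - f 0) / t < M)
    (n : ℕ) (hn : 1 ≤ n) (r q : Fin n → ℝ)
    (hq : q ∈ simplex n) (hq_pos : ∀ i, 0 < q i)
    (β : ℝ) (hβ : 0 < β)
    (p : Fin n → ℝ) (hp : p ∈ simplex n)
    (hmax : ∀ p' ∈ simplex n, obj n r q β f p' ≤ obj n r q β f p) :
    ∀ i, 0 < p i := by
  intro i
  by_contra hpi
  have hpi0 : p i = 0 := le_antisymm (not_lt.mp hpi) (hp.1 i)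
  -- find a coordinate with positive mass
  obtain ⟨j, hpj⟩ : ∃ j, 0 < p j := by
    by_contra h
    push_neg at h
    have h0 : ∑ k, p k = 0 :=
      Finset.sum_eq_zero (fun k _ => le_antisymm (h k) (hp.1 k))
    rw [hp.2] at h0
    norm_num at h0
  have hij : i ≠ j := by
    rintro rfl
    rw [hpi0] at hpj
    exact lt_irrefl 0 hpj
  set s : ℝ := p j / q j with hs_def
  have hqj := hq_pos j
  have hqi := hq_pos i
  have hs_pos : 0 < s := div_pos hpj hqj
  -- bound the derivative of f on [s/2, s]
  have hIcc_sub : Set.Icc (s/2) s ⊆ Set.Ioi 0 := by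
    intro x hx
    have := hx.1
    simp only [Set.mem_Ioi]
    linarith
  obtain ⟨C, hC⟩ :=
    (isCompact_Icc (a := s/2) (b := s)).exists_bound_of_continuousOn
      (hf_deriv_cont.mono hIcc_sub)
  -- MVT-type estimate near s
  have key : ∀ δ : ℝ, 0 < δ → δ ≤ s/2 → |f (s - δ) - f s| ≤ C * δ := by
    intro δ hδ hδ2
    have hab : s - δ < s := by linarith
    have hsub : Set.Icc (s - δ) s ⊆ Set.Ici 0 := by
      intro x hx
      have := hx.1
      simp only [Set.mem_Ici]
      linarith
    obtain ⟨c, hc, hcd⟩ := exists_hasDerivAt_eq_slope f (deriv f) hab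
      (hf_cont.mono hsub)
      (fun x hx => (hf_diff x (by simp only [Set.mem_Ioi]; have := hx.1; linarith)).hasDerivAt)
    have hcIcc : c ∈ Set.Icc (s/2) s := ⟨by linarith [hc.1], le_of_lt hc.2⟩
    have hCc : |deriv f c| ≤ C := hC c hcIcc
    have hne : s - (s - δ) ≠ 0 := by linarith
    have hval : f s - f (s - δ) = deriv f c * δ := by
      field_simp at hcd
      linarith [hcd]
    have : |f (s - δ) - f s| = |deriv f c| * δ := by
      rw [abs_sub_comm, hval, abs_mul, abs_of_pos hδ]
    rw [this]
    exact mul_le_mul_of_nonneg_right hCc (le_of_lt hδ)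
  -- choose t via hratio
  set M : ℝ := (r i - r j - β * C - 1) / β with hM_def
  have ha : (0:ℝ) < (p j / 2) / q i := div_pos (by linarith) hqi
  obtain ⟨t, ht0, hta, htM⟩ := hratio ((p j / 2) / q i) ha M
  set ε : ℝ := t * q i with hε_def
  have hε0 : 0 < ε := mul_pos ht0 hqi
  have hε_lt : ε < p j / 2 := by
    calc ε = t * q i := hε_def
      _ < ((p j / 2) / q i) * q i := mul_lt_mul_of_pos_right hta hqi
      _ = p j / 2 := by field_simp
  -- the perturbed point
  set p' : Fin n → ℝ := Function.update (Function.update p j (p j - ε)) i ε with hp'_def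
  have hp'i : p' i = ε := by rw [hp'_def]; simp
  have hp'j : p' j = p j - ε := by
    rw [hp'_def, Function.update_of_ne (Ne.symm hij)]
    exact Function.update_self j (p j - ε) p
  have hp'k : ∀ k, k ≠ i → k ≠ j → p' k = p k := by
    intro k hki hkj
    rw [hp'_def, Function.update_of_ne hki, Function.update_of_ne hkj]
  have hrest : ∀ (G : Fin n → ℝ → ℝ),
      ∑ k ∈ univ \ ({i, j} : Finset (Fin n)), G k (p' k)
        = ∑ k ∈ univ \ ({i, j} : Finset (Fin n)), G k (p k) := by
    intro G
    apply Finset.sum_congr rfl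
    intro k hk
    simp only [Finset.mem_sdiff, Finset.mem_insert, Finset.mem_singleton] at hk
    push_neg at hk
    rw [hp'k k hk.2.1 hk.2.2]
  -- p' is in the simplex
  have hp'_mem : p' ∈ simplex n := by
    constructor
    · intro k
      by_cases hki : k = i
      · rw [hki, hp'i]; linarith
      · by_cases hkj : k = j
        · rw [hkj, hp'j]; linarith
        · rw [hp'k k hki hkj]; exact hp.1 k
    · have h1 := sum_split i j hij p'
      have h2 := sum_split i j hij p
      rw [hp.2] at h2
      have h3 := hrest (fun _ x => x)
      rw [h1, hp'i, hp'j, h3]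
      linarith
  -- compute the objective difference
  have hobj : obj n r q β f p' - obj n r q β f p
      = (r i * ε + r j * (p j - ε) - (r i * p i + r j * p j))
        - β * (q i * f (ε / q i) + q j * f ((p j - ε) / q j)
          - (q i * f (p i / q i) + q j * f (p j / q j))) := by
    unfold obj
    rw [sum_split i j hij (fun k => r k * p' k),
        sum_split i j hij (fun k => r k * p k),
        sum_split i j hij (fun k => q k * f (p' k / q k)),
        sum_split i j hij (fun k => q k * f (p k / q k))]
    rw [hp'i, hp'j]
    have h3 := hrest (fun k x => r k * x)
    have h4 := hrest (fun k x => q k * f (x / q k))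
    rw [h3, h4]
    ring
  -- simplify the pieces
  have hεqi : ε / q i = t := by
    rw [hε_def]
    field_simp
  have hslope : q i * (f t - f 0) < ε * M := by
    have h1 : (f t - f 0) < M * t := by
      have := (div_lt_iff₀ ht0).mp htM
      linarith
    calc q i * (f t - f 0) < q i * (M * t) :=
          mul_lt_mul_of_pos_left h1 hqi
      _ = ε * M := by rw [hε_def]; ring
  have hδ2 : ε / q j ≤ s / 2 := by
    rw [hs_def, div_le_div_iff₀ hqj (by norm_num : (0:ℝ) < 2)]
    have h : p j / q j * q j = p j := by field_simp
    rw [h]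
    linarith
  have hδ0 : 0 < ε / q j := div_pos hε0 hqj
  have hkey := key (ε / q j) hδ0 hδ2
  have hpjε : (p j - ε) / q j = s - ε / q j := by
    rw [hs_def]; field_simp
  have hBj : q j * (f ((p j - ε) / q j) - f (p j / q j)) ≤ C * ε := by
    have hsq : p j / q j = s := hs_def.symm
    rw [hpjε, hsq]
    have h1 : f (s - ε / q j) - f s ≤ C * (ε / q j) :=
      le_trans (le_abs_self _) hkey
    have h2 : q j * (f (s - ε / q j) - f s) ≤ q j * (C * (ε / q j)) :=
      mul_le_mul_of_nonneg_left h1 (le_of_lt hqj)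
    have h3 : q j * (C * (ε / q j)) = C * ε := by
      field_simp
    linarith
  -- conclude
  have hβM : β * M = r i - r j - β * C - 1 := by
    rw [hM_def]; field_simp
  have hpos : 0 < obj n r q β f p' - obj n r q β f p := by
    rw [hobj, hpi0, hεqi]
    have hz : (0:ℝ) / q i = 0 := zero_div _
    rw [hz]
    have e1 : β * (q i * (f t - f 0)) < β * (ε * M) :=
      mul_lt_mul_of_pos_left hslope hβ
    have e2 : β * (q j * (f ((p j - ε) / q j) - f (p j / q j))) ≤ β * (C * ε) :=
      mul_le_mul_of_nonneg_left hBj (le_of_lt hβ)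
    have e5 : β * (ε * M) + β * (C * ε) = (r i - r j) * ε - ε := by
      calc β * (ε * M) + β * (C * ε) = ε * (β * M) + β * C * ε := by ring
        _ = ε * (r i - r j - β * C - 1) + β * C * ε := by rw [hβM]
        _ = (r i - r j) * ε - ε := by ring
    linarith
  have := hmax p' hp'_mem
  linarith
end

section
/- Let f : [0,∞) → ℝ be continuous on [0,∞) and continuously differentiable on (0,∞). Suppose there exist a > 0 and M ∈ ℝ such that (f(t) − f(0))/t ≥ M for all t ∈ (0,a). Then for every integer n ≥ 2 and every β > 0, taking q ∈ Δⁿ to be the uniform distribution (qᵢ = 1/n for all i), there exists r ∈ ℝⁿ such that the first standard basis vector e₁ is a maximizer of g(p) = Σᵢ rᵢ pᵢ − β Σᵢ qᵢ f(pᵢ/qᵢ) over Δⁿ; in particular this maximizer has zero coordinates. -/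
open Finset

/-- The first standard basis vector `e₁ = (1,0,…,0)` in ℝⁿ. -/
def e1 (n : ℕ) : Fin n → ℝ := fun i => if (i : ℕ) = 0 then 1 else 0

set_option maxHeartbeats 1000000 in
theorem stmt2 (f : ℝ → ℝ)
    (hf_cont : ContinuousOn f (Set.Ici 0))
    (hf_diff : ∀ t ∈ Set.Ioi (0 : ℝ), DifferentiableAt ℝ f t)
    (hf_deriv_cont : ContinuousOn (deriv f) (Set.Ioi 0))
    (hbound : ∃ a > (0 : ℝ), ∃ M : ℝ, ∀ t : ℝ, 0 < t → t < a → M ≤ (f t - f 0) / t)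
    (n : ℕ) (hn : 2 ≤ n) (β : ℝ) (hβ : 0 < β) :
    ∃ r : Fin n → ℝ,
      e1 n ∈ simplex n ∧
      (∀ p' ∈ simplex n,
        obj n r (fun _ => (n : ℝ)⁻¹) β f p' ≤ obj n r (fun _ => (n : ℝ)⁻¹) β f (e1 n)) ∧
      ∃ i : Fin n, e1 n i = 0 := by
  obtain ⟨a, ha, M, hM⟩ := hbound
  haveI : NeZero n := ⟨by omega⟩
  have hn0 : (0:ℝ) < (n:ℝ) := by exact_mod_cast (by omega : 0 < n)
  have hn1 : (1:ℝ) ≤ (n:ℝ) := by exact_mod_cast (by omega : 1 ≤ n)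
  -- bound on |f| on [0,n]
  obtain ⟨B0, hB0⟩ := (isCompact_Icc : IsCompact (Set.Icc (0:ℝ) (n:ℝ))).exists_bound_of_continuousOn
    (hf_cont.mono Set.Icc_subset_Ici_self)
  set B : ℝ := max B0 0 with hBdef
  have hB : ∀ t, 0 ≤ t → t ≤ (n:ℝ) → |f t| ≤ B := by
    intro t h1 h2
    calc |f t| = ‖f t‖ := (Real.norm_eq_abs _).symm
    _ ≤ B0 := hB0 t ⟨h1, h2⟩
    _ ≤ B := le_max_left _ _
  have hBpos : 0 ≤ B := le_max_right _ _
  -- bound on |deriv f| on [1,n]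
  obtain ⟨K0, hK0⟩ := (isCompact_Icc : IsCompact (Set.Icc (1:ℝ) (n:ℝ))).exists_bound_of_continuousOn
    (hf_deriv_cont.mono (fun x hx => lt_of_lt_of_le one_pos hx.1))
  set K : ℝ := max K0 0 with hKdef
  have hK : ∀ t, 1 ≤ t → t ≤ (n:ℝ) → |deriv f t| ≤ K := by
    intro t h1 h2
    calc |deriv f t| = ‖deriv f t‖ := (Real.norm_eq_abs _).symm
    _ ≤ K0 := hK0 t ⟨h1, h2⟩
    _ ≤ K := le_max_left _ _
  have hKpos : 0 ≤ K := le_max_right _ _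
  -- lower slope bound on [0,n]
  set N : ℝ := max (-(min M (-(2*B)/a))) 0 with hNdef
  have hNpos : 0 ≤ N := le_max_right _ _
  have hN : ∀ t, 0 ≤ t → t ≤ (n:ℝ) → f 0 - f t ≤ N * t := by
    intro t ht htn
    rcases eq_or_lt_of_le ht with h | h
    · simp [← h]
    rcases lt_or_ge t a with hta | hta
    · have h1 := hM t h hta
      have hMN : -N ≤ M := by
        have h2 : -(min M (-(2*B)/a)) ≤ N := le_max_left _ _
        have h3 := min_le_left M (-(2*B)/a)
        linarith
      have h4 : M * t ≤ f t - f 0 := (le_div_iff₀ h).mp h1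
      nlinarith
    · have h1 := abs_le.mp (hB t ht htn)
      have h2 := abs_le.mp (hB 0 le_rfl (by linarith))
      have hNge : 2*B/a ≤ N := by
        have h3 : -(min M (-(2*B)/a)) ≤ N := le_max_left _ _
        have h5 : -(2*B)/a = -(2*B/a) := by ring
        have h4 : min M (-(2*B)/a) ≤ -(2*B/a) :=
          le_trans (min_le_right M (-(2*B)/a)) (le_of_eq h5)
        linarith
      have h6 : 2*B/a * a ≤ N * t := by
        apply mul_le_mul hNge hta (le_of_lt ha) hNpos
      rw [div_mul_cancel₀] at h6
      · linarith
      · exact ne_of_gt ha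
  -- Lipschitz-type bound on [1,n]
  have hLip : ∀ s, 1 ≤ s → s ≤ (n:ℝ) → f (n:ℝ) - f s ≤ K * ((n:ℝ) - s) := by
    intro s h1 h2
    rcases eq_or_lt_of_le h2 with h | h
    · simp [h]
    · obtain ⟨c, hc, hderiv⟩ := exists_hasDerivAt_eq_slope f (deriv f) h
        (hf_cont.mono (fun x hx => le_trans (by linarith) hx.1))
        (fun x hx => (hf_diff x (by simp only [Set.mem_Ioi]; linarith [hx.1])).hasDerivAt)
      have hcK := abs_le.mp (hK c (le_trans h1 hc.1.le) hc.2.le)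
      have hne : (n:ℝ) - s ≠ 0 := ne_of_gt (by linarith)
      have heq : f (n:ℝ) - f s = deriv f c * ((n:ℝ) - s) := by
        rw [hderiv, div_mul_cancel₀ _ hne]
      rw [heq]
      nlinarith [sub_pos.mpr h]
  set L : ℝ := K * (n:ℝ) + 4*B + N*(n:ℝ) with hLdef
  refine ⟨fun i => if (i:ℕ) = 0 then β * (n:ℝ)⁻¹ * L else 0, ⟨?_, ?_⟩, ?_, ⟨⟨1, by omega⟩, by simp [e1]⟩⟩
  · intro i
    unfold e1
    split <;> norm_num
  · have hfun : (fun i : Fin n => e1 n i) = fun i : Fin n => if i = 0 then (1:ℝ) else 0 := by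
      funext i
      simp only [e1, Fin.val_eq_zero_iff]
    show ∑ i, e1 n i = 1
    rw [show (∑ i, e1 n i) = ∑ i : Fin n, (if i = 0 then (1:ℝ) else 0) from by rw [← hfun]]
    simp
  · rintro p ⟨hp0, hp1⟩
    have hn2 : (2:ℝ) ≤ (n:ℝ) := by exact_mod_cast hn
    have hple : ∀ i, p i ≤ 1 := by
      intro i
      calc p i ≤ ∑ j, p j := Finset.single_le_sum (fun j _ => hp0 j) (mem_univ i)
      _ = 1 := hp1
    have hiff : ∀ i : Fin n, ((i:ℕ) = 0) ↔ (i = 0) := by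
      intro i
      constructor
      · intro h; exact Fin.ext (by simpa using h)
      · intro h; simp [h]
    unfold obj e1
    simp only [hiff]
    have hinv : ∀ x : ℝ, x / (n:ℝ)⁻¹ = x * (n:ℝ) := by
      intro x; field_simp
    simp only [hinv, ite_mul, zero_mul, one_mul]
    rw [Finset.sum_ite_eq' univ (0 : Fin n) (fun i => β * (n:ℝ)⁻¹ * L * p i)]
    rw [Finset.sum_ite_eq' univ (0 : Fin n)
      (fun i => β * (n:ℝ)⁻¹ * L * (if i = (0:Fin n) then (1:ℝ) else 0))]
    simp only [mem_univ, if_true, if_pos (rfl : (0:Fin n) = 0), mul_one, mul_zero, zero_mul]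
    -- split the f-sums at index 0
    rw [Fintype.sum_eq_add_sum_compl (0 : Fin n) (fun i => (n:ℝ)⁻¹ * f (p i * (n:ℝ)))]
    rw [Fintype.sum_eq_add_sum_compl (0 : Fin n)
      (fun i => (n:ℝ)⁻¹ * f (if i = (0:Fin n) then (n:ℝ) else 0))]
    simp only [if_pos (rfl : (0:Fin n) = 0)]
    have hcompl : ∀ i ∈ ({0}ᶜ : Finset (Fin n)), (n:ℝ)⁻¹ * f (if i = (0:Fin n) then (n:ℝ) else 0)
        = (n:ℝ)⁻¹ * f 0 := by
      intro i hi
      rw [if_neg (by simpa using hi)]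
    rw [Finset.sum_congr rfl hcompl, Finset.sum_const,
      (Finset.mul_sum ({0}ᶜ : Finset (Fin n)) (fun i => f (p i * (n:ℝ))) ((n:ℝ)⁻¹)).symm]
    have hcard : (({0}ᶜ : Finset (Fin n)).card : ℝ) = (n:ℝ) - 1 := by
      rw [Finset.card_compl]
      simp only [Finset.card_singleton, Fintype.card_fin]
      push_cast [Nat.cast_sub (by omega : 1 ≤ n)]
      ring
    rw [nsmul_eq_mul, hcard]
    -- rest of p-sum
    have hsum_rest : ∑ i ∈ ({0}ᶜ : Finset (Fin n)), p i = 1 - p 0 := by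
      have h := Fintype.sum_eq_add_sum_compl (0 : Fin n) p
      rw [hp1] at h
      linarith
    -- bound on the tail sum
    have hrest : ((n:ℝ) - 1) * f 0 - (∑ i ∈ ({0}ᶜ : Finset (Fin n)), f (p i * (n:ℝ)))
        ≤ N * (n:ℝ) * (1 - p 0) := by
      have h1 : ∀ i ∈ ({0}ᶜ : Finset (Fin n)), f 0 - f (p i * (n:ℝ)) ≤ N * (n:ℝ) * p i := by
        intro i _
        have := hN (p i * (n:ℝ)) (mul_nonneg (hp0 i) hn0.le) (by nlinarith [hple i, hp0 i])
        nlinarith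
      have h2 : ∑ i ∈ ({0}ᶜ : Finset (Fin n)), (f 0 - f (p i * (n:ℝ)))
          ≤ ∑ i ∈ ({0}ᶜ : Finset (Fin n)), N * (n:ℝ) * p i := Finset.sum_le_sum h1
      rw [Finset.sum_sub_distrib, Finset.sum_const, ← Finset.mul_sum, hsum_rest, nsmul_eq_mul, hcard] at h2
      linarith
    -- bound on the first term
    have hfirst : f (n:ℝ) - f (p 0 * (n:ℝ)) ≤ (K * (n:ℝ) + 4*B) * (1 - p 0) := by
      rcases le_or_gt (1/2 : ℝ) (p 0) with h | h
      · have h1 : (1:ℝ) ≤ p 0 * (n:ℝ) := by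
          linarith [mul_le_mul_of_nonneg_right h hn0.le, hn2]
        have h2 : p 0 * (n:ℝ) ≤ (n:ℝ) := by nlinarith [hple 0]
        have h3 := hLip (p 0 * (n:ℝ)) h1 h2
        nlinarith [hple 0]
      · have h1 := abs_le.mp (hB ((p 0) * (n:ℝ)) (mul_nonneg (hp0 0) hn0.le) (by nlinarith [hple 0]))
        have h2 := abs_le.mp (hB (n:ℝ) (by linarith) le_rfl)
        have h3 : 0 ≤ K * (n:ℝ) * (1 - p 0) :=
          mul_nonneg (mul_nonneg hKpos hn0.le) (by linarith [hple 0])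
        have h4 : 2*B ≤ 4*B * (1 - p 0) := by nlinarith
        nlinarith [hple 0]
    have hβn : 0 < β * (n:ℝ)⁻¹ := by positivity
    have hkey : f (n:ℝ) + ((n:ℝ) - 1) * f 0 - f (p 0 * (n:ℝ))
        - (∑ i ∈ ({0}ᶜ : Finset (Fin n)), f (p i * (n:ℝ)))
        ≤ L * (1 - p 0) := by
      rw [hLdef]
      nlinarith [hrest, hfirst]
    have hmul := mul_le_mul_of_nonneg_left hkey hβn.le
    simp only [if_true]
    linarith [hmul]
end

section
/- Let f : [0,∞) → ℝ be continuous on [0,∞) and continuously differentiable on (0,∞), and suppose lim_{t→0⁺} f'(t) = −∞. Then for every n ≥ 1, every r ∈ ℝⁿ, every q ∈ Δⁿ with qᵢ > 0 for all i, and every β > 0, every maximizer p of g(p) = Σᵢ rᵢ pᵢ − β Σᵢ qᵢ f(pᵢ/qᵢ) over Δⁿ satisfies pᵢ > 0 for all i ∈ {1,…,n}. -/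
open Finset Filter

set_option maxHeartbeats 1000000

/-- if `lim_{t→0⁺} f'(t) = −∞`, then every maximizer of `g` over the
simplex has all coordinates strictly positive. -/
theorem stmt3 (f : ℝ → ℝ)
    (hf_cont : ContinuousOn f (Set.Ici 0))
    (hf_diff : ∀ t ∈ Set.Ioi (0 : ℝ), DifferentiableAt ℝ f t)
    (hf_deriv_cont : ContinuousOn (deriv f) (Set.Ioi 0))
    (hlim : Tendsto (deriv f) (nhdsWithin 0 (Set.Ioi 0)) atBot)
    (n : ℕ) (hn : 1 ≤ n) (r q : Fin n → ℝ)
    (hq : q ∈ simplex n) (hq_pos : ∀ i, 0 < q i)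
    (β : ℝ) (hβ : 0 < β)
    (p : Fin n → ℝ) (hp : p ∈ simplex n)
    (hmax : ∀ p' ∈ simplex n, obj n r q β f p' ≤ obj n r q β f p) :
    ∀ i, 0 < p i := by
  intro i
  by_contra hpi
  push_neg at hpi
  obtain ⟨hp_nonneg, hp_sum⟩ := hp
  have hpi0 : p i = 0 := le_antisymm hpi (hp_nonneg i)
  -- find a coordinate with positive mass
  have hjex : ∃ j, 0 < p j := by
    by_contra h
    push_neg at h
    have hz : ∑ k, p k = 0 :=
      Finset.sum_eq_zero fun k _ => le_antisymm (h k) (hp_nonneg k)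
    rw [hz] at hp_sum; norm_num at hp_sum
  obtain ⟨j, hpj⟩ := hjex
  have hij : i ≠ j := by rintro rfl; rw [hpi0] at hpj; exact lt_irrefl 0 hpj
  have hqi : 0 < q i := hq_pos i
  have hqj : 0 < q j := hq_pos j
  -- bound on deriv f on a compact interval around p j / q j
  set a : ℝ := p j / (2 * q j) with ha_def
  have ha_pos : 0 < a := by positivity
  set b : ℝ := p j / q j with hb_def
  have hb_pos : 0 < b := by positivity
  have hab : a < b := by
    rw [ha_def, hb_def, div_lt_div_iff₀ (by positivity) hqj]
    nlinarith
  obtain ⟨K, hK⟩ : ∃ K, ∀ x ∈ Set.Icc a b, |deriv f x| ≤ K := by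
    have hc : ContinuousOn (deriv f) (Set.Icc a b) :=
      hf_deriv_cont.mono (fun x hx => lt_of_lt_of_le ha_pos hx.1)
    obtain ⟨K, hK⟩ := (isCompact_Icc).exists_bound_of_continuousOn hc
    exact ⟨K, fun x hx => by simpa [Real.norm_eq_abs] using hK x hx⟩
  have hK0 : 0 ≤ K := le_trans (abs_nonneg _) (hK a ⟨le_refl a, hab.le⟩)
  set M : ℝ := (|r i - r j| + β * K + 1) / β with hM_def
  have hβM : β * M = |r i - r j| + β * K + 1 := by
    rw [hM_def]; field_simp
  -- small neighborhood where deriv f ≤ -M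
  have hev : ∀ᶠ t in nhdsWithin 0 (Set.Ioi 0), deriv f t ≤ -M :=
    hlim.eventually (eventually_le_atBot (-M))
  obtain ⟨δ, hδpos, hδ'⟩ := Metric.mem_nhdsWithin_iff.mp hev
  have hδ : ∀ t : ℝ, dist t 0 < δ → t ∈ Set.Ioi (0:ℝ) → deriv f t ≤ -M := by
    intro t h1t h2t
    exact hδ' ⟨Metric.mem_ball.mpr h1t, h2t⟩
  -- choose ε
  set ε : ℝ := min (p j / 2) (δ * q i / 2) with hε_def
  have hε_pos : 0 < ε := lt_min (by positivity) (by positivity)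
  have hε_le : ε ≤ p j / 2 := min_le_left _ _
  have hε_lt_pj : ε < p j := lt_of_le_of_lt hε_le (by linarith)
  have hε_le2 : ε ≤ δ * q i / 2 := min_le_right _ _
  set s : ℝ := ε / q i with hs_def
  have hs_pos : 0 < s := by positivity
  have hs_lt_δ : s < δ := by
    rw [hs_def, div_lt_iff₀ hqi]
    nlinarith
  -- the perturbed point
  set p' : Fin n → ℝ :=
    fun k => p k + (if k = i then ε else 0) - (if k = j then ε else 0) with hp'_def
  have hp'i : p' i = ε := by simp [hp'_def, hij, hpi0]
  have hp'j : p' j = p j - ε := by simp [hp'_def, Ne.symm hij]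
  have hp'mem : p' ∈ simplex n := by
    constructor
    · intro k
      rcases eq_or_ne k i with rfl | hki
      · rw [hp'i]; exact hε_pos.le
      · rcases eq_or_ne k j with rfl | hkj
        · rw [hp'j]; linarith
        · simp [hp'_def, hki, hkj]; exact hp_nonneg k
    · have : ∑ k, p' k = (∑ k, p k) + ε - ε := by
        simp only [hp'_def]
        rw [Finset.sum_sub_distrib, Finset.sum_add_distrib,
          Finset.sum_ite_eq' Finset.univ i (fun _ => ε),
          Finset.sum_ite_eq' Finset.univ j (fun _ => ε)]
        simp
      rw [this, hp_sum]; ring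
  -- linear part
  have h1 : ∑ k, r k * p' k = (∑ k, r k * p k) + (r i * ε - r j * ε) := by
    simp only [hp'_def, mul_add, mul_sub, mul_ite, mul_zero]
    rw [Finset.sum_sub_distrib, Finset.sum_add_distrib,
      Finset.sum_ite_eq' Finset.univ i (fun k => r k * ε),
      Finset.sum_ite_eq' Finset.univ j (fun k => r k * ε)]
    simp; ring
  -- nonlinear part
  set F : Fin n → ℝ := fun k => q k * f (p' k / q k) - q k * f (p k / q k) with hF_def
  have h2 : ∑ k, F k = F i + F j := by
    apply Finset.sum_eq_add_of_mem i j (Finset.mem_univ i) (Finset.mem_univ j) hij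
    rintro k _ ⟨hki, hkj⟩
    have : p' k = p k := by simp [hp'_def, hki, hkj]
    simp [hF_def, this]
  have hFi_val : F i = q i * (f s - f 0) := by
    rw [hF_def]; simp [hp'i, hpi0, hs_def]; ring
  have hFj_val : F j = q j * (f ((p j - ε) / q j) - f b) := by
    rw [hF_def]; simp [hp'j, hb_def]; ring
  -- MVT for the i-term
  have hFi_le : F i ≤ -M * ε := by
    obtain ⟨c, hc, hcd⟩ := exists_deriv_eq_slope f hs_pos
      (hf_cont.mono (fun x hx => hx.1))
      (fun x hx => (hf_diff x hx.1).differentiableWithinAt)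
    have hderc : deriv f c ≤ -M := by
      apply hδ
      · rw [Real.dist_eq, sub_zero, abs_of_pos hc.1]
        exact lt_trans hc.2 hs_lt_δ
      · exact hc.1
    have hfs : f s - f 0 = deriv f c * s := by
      rw [hcd, sub_zero, div_mul_cancel₀ _ hs_pos.ne']
    rw [hFi_val, hfs]
    have hqs : q i * s = ε := by rw [hs_def]; field_simp
    calc q i * (deriv f c * s) = deriv f c * (q i * s) := by ring
      _ = deriv f c * ε := by rw [hqs]
      _ ≤ -M * ε := mul_le_mul_of_nonneg_right hderc hε_pos.le
  -- MVT for the j-term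
  have hFj_le : F j ≤ K * ε := by
    set a2 : ℝ := (p j - ε) / q j with ha2_def
    have ha2_pos : 0 < a2 := div_pos (by linarith) hqj
    have ha2b : a2 < b := by
      rw [ha2_def, hb_def, div_lt_div_iff₀ hqj hqj]
      nlinarith [mul_lt_mul_of_pos_right (show p j - ε < p j by linarith) hqj]
    have haa2 : a ≤ a2 := by
      rw [ha_def, ha2_def, div_le_div_iff₀ (by positivity) hqj]
      nlinarith [mul_le_mul_of_nonneg_right hε_le hqj.le]
    obtain ⟨c2, hc2, hc2d⟩ := exists_deriv_eq_slope f ha2b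
      (hf_cont.mono (fun x hx => le_trans ha2_pos.le hx.1))
      (fun x hx => (hf_diff x (lt_trans ha2_pos hx.1)).differentiableWithinAt)
    have hba2 : b - a2 = ε / q j := by
      rw [hb_def, ha2_def]; field_simp; ring
    have hfb : f b - f a2 = deriv f c2 * (b - a2) := by
      rw [hc2d, div_mul_cancel₀ _ (ne_of_gt (by linarith : (0:ℝ) < b - a2))]
    have hFjval2 : F j = -(deriv f c2) * ε := by
      rw [hFj_val]
      have h3 : f a2 - f b = -(deriv f c2) * (b - a2) := by linarith
      rw [h3, hba2]
      field_simp
    have hc2mem : c2 ∈ Set.Icc a b := ⟨le_trans haa2 hc2.1.le, hc2.2.le⟩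
    have hd2 : |deriv f c2| ≤ K := hK c2 hc2mem
    rw [hFjval2]
    have : -(deriv f c2) ≤ K := by
      have := neg_abs_le (deriv f c2)
      linarith [abs_le.mp hd2]
    exact mul_le_mul_of_nonneg_right this hε_pos.le
  -- put everything together
  have hsumF : ∑ k, F k = (∑ k, q k * f (p' k / q k)) - ∑ k, q k * f (p k / q k) := by
    simp only [hF_def]
    rw [Finset.sum_sub_distrib]
  have key : obj n r q β f p < obj n r q β f p' := by
    unfold obj
    have e2 : ∑ k, q k * f (p' k / q k) = (∑ k, q k * f (p k / q k)) + (F i + F j) := by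
      rw [← h2, hsumF]; ring
    rw [h1, e2]
    have hβF : β * (F i + F j) ≤ β * (-M * ε + K * ε) :=
      mul_le_mul_of_nonneg_left (add_le_add hFi_le hFj_le) hβ.le
    have heq : β * (-M * ε + K * ε) = -(|r i - r j| + 1) * ε := by
      linear_combination (-ε) * hβM
    have habs : -|r i - r j| * ε ≤ (r i - r j) * ε :=
      mul_le_mul_of_nonneg_right (neg_abs_le _) hε_pos.le
    nlinarith
  exact absurd (hmax p' hp'mem) (not_le.mpr key)
end

section
/- Let f : [0,∞) → ℝ be continuous on [0,∞) and continuously differentiable on (0,∞), and suppose the limit L = lim_{t→0⁺} f'(t) exists in the extended reals [−∞,+∞] with L ≠ −∞. Then there exist n ≥ 2, r ∈ ℝⁿ, q ∈ Δⁿ with qᵢ > 0 for all i, and β > 0 such that some maximizer p of g(p) = Σᵢ rᵢ pᵢ − β Σᵢ qᵢ f(pᵢ/qᵢ) over Δⁿ has pᵢ = 0 for some coordinate i. -/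
open Finset Filter

/-- if the limit `L = lim_{t→0⁺} f'(t)` exists in the extended reals
and `L ≠ −∞`, then there is an instance (some `n ≥ 2`, `r`, `q` with positive
entries, and `β > 0`) admitting a maximizer of `g` over the simplex with a zero
coordinate. -/
theorem stmt4 (f : ℝ → ℝ)
    (hf_cont : ContinuousOn f (Set.Ici 0))
    (hf_diff : ∀ t ∈ Set.Ioi (0 : ℝ), DifferentiableAt ℝ f t)
    (hf_deriv_cont : ContinuousOn (deriv f) (Set.Ioi 0))
    (L : EReal) (hL : L ≠ ⊥)
    (hlim : Tendsto (fun t : ℝ => ((deriv f t : ℝ) : EReal))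
      (nhdsWithin 0 (Set.Ioi 0)) (nhds L)) :
    ∃ n : ℕ, 2 ≤ n ∧
      ∃ r q : Fin n → ℝ, q ∈ simplex n ∧ (∀ i, 0 < q i) ∧
        ∃ β : ℝ, 0 < β ∧
          ∃ p ∈ simplex n,
            (∀ p' ∈ simplex n, obj n r q β f p' ≤ obj n r q β f p) ∧
            ∃ i : Fin n, p i = 0 := by
  -- get a real lower bound c for deriv f on a right-neighborhood (0, u) of 0
  have hbotL : (⊥ : EReal) < L := Ne.bot_lt hL
  obtain ⟨c, -, hcL⟩ := EReal.lt_iff_exists_real_btwn.mp hbotL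
  have hev : ∀ᶠ t in nhdsWithin 0 (Set.Ioi 0), (c : EReal) < ((deriv f t : ℝ) : EReal) :=
    hlim.eventually_const_lt hcL
  have hev' : {t : ℝ | c < deriv f t} ∈ nhdsWithin 0 (Set.Ioi 0) := by
    filter_upwards [hev] with t ht
    exact_mod_cast ht
  rw [mem_nhdsGT_iff_exists_Ioo_subset] at hev'
  obtain ⟨u, hu, hsub⟩ := hev'
  have hu0 : (0 : ℝ) < u := hu
  set δ : ℝ := min u 1 with hδdef
  have hδ0 : 0 < δ := lt_min hu0 one_pos
  have hδu : δ ≤ u := min_le_left _ _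
  have hδ1 : δ ≤ 1 := min_le_right _ _
  -- bound of f on [0,2]
  obtain ⟨M₀, hM₀⟩ := (isCompact_Icc (a := (0:ℝ)) (b := 2)).exists_bound_of_continuousOn
    (hf_cont.mono (fun x hx => hx.1))
  have hM₀0 : 0 ≤ M₀ := le_trans (norm_nonneg _) (hM₀ 0 ⟨le_refl _, by norm_num⟩)
  -- bound of deriv f on [1,2]
  obtain ⟨M₁, hM₁⟩ := (isCompact_Icc (a := (1:ℝ)) (b := 2)).exists_bound_of_continuousOn
    (hf_deriv_cont.mono (fun x hx => lt_of_lt_of_le one_pos hx.1))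
  have hM₁0 : 0 ≤ M₁ := le_trans (norm_nonneg _) (hM₁ 1 ⟨le_refl _, by norm_num⟩)
  set C : ℝ := max |c| (2 * M₀ / δ) with hCdef
  have hC0 : 0 ≤ C := le_trans (abs_nonneg c) (le_max_left _ _)
  set K : ℝ := max (2 * C + 2 * M₁) (8 * M₀) with hKdef
  have hK1 : 2 * C + 2 * M₁ ≤ K := le_max_left _ _
  have hK2 : 8 * M₀ ≤ K := le_max_right _ _
  have hK0 : 0 ≤ K := le_trans (by positivity) hK1
  -- monotonicity of f t - c t on [0, δ]
  have hmonoA : MonotoneOn (fun t => f t - c * t) (Set.Icc 0 δ) := by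
    apply monotoneOn_of_deriv_nonneg (convex_Icc _ _)
    · exact (hf_cont.mono Set.Icc_subset_Ici_self).sub
        ((continuous_const.mul continuous_id).continuousOn)
    · intro x hx
      rw [interior_Icc] at hx
      exact ((hf_diff x hx.1).sub ((differentiableAt_id.const_mul c))).differentiableWithinAt
    · intro x hx
      rw [interior_Icc] at hx
      have h1 : HasDerivAt (fun t => f t - c * t) (deriv f x - c * 1) x :=
        ((hf_diff x hx.1).hasDerivAt).sub ((hasDerivAt_id x).const_mul c)
      have hd : deriv (fun t => f t - c * t) x = deriv f x - c := by
        simpa using h1.deriv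
      rw [hd]
      have hcx : c < deriv f x := hsub ⟨hx.1, lt_of_lt_of_le hx.2 hδu⟩
      linarith
  -- monotonicity of M₁ t - f t on [1, 2]
  have hmonoB : MonotoneOn (fun t => M₁ * t - f t) (Set.Icc 1 2) := by
    apply monotoneOn_of_deriv_nonneg (convex_Icc _ _)
    · exact ((continuous_const.mul continuous_id).continuousOn).sub
        (hf_cont.mono (fun x hx => le_trans zero_le_one hx.1))
    · intro x hx
      rw [interior_Icc] at hx
      exact ((differentiableAt_id.const_mul M₁).sub
        (hf_diff x (lt_trans one_pos hx.1))).differentiableWithinAt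
    · intro x hx
      rw [interior_Icc] at hx
      have h1 : HasDerivAt (fun t => M₁ * t - f t) (M₁ * 1 - deriv f x) x :=
        ((hasDerivAt_id x).const_mul M₁).sub ((hf_diff x (lt_trans one_pos hx.1)).hasDerivAt)
      have hd : deriv (fun t => M₁ * t - f t) x = M₁ - deriv f x := by
        simpa using h1.deriv
      rw [hd]
      have hbx : deriv f x ≤ M₁ := by
        have := hM₁ x ⟨le_of_lt hx.1, le_of_lt hx.2⟩
        rw [Real.norm_eq_abs] at this
        exact le_trans (le_abs_self _) this
      linarith
  -- Claim A : f 0 - f v ≤ C * v on [0, 2]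
  have claimA : ∀ v ∈ Set.Icc (0:ℝ) 2, f 0 - f v ≤ C * v := by
    intro v hv
    rcases le_or_gt v δ with h | h
    · have := hmonoA ⟨le_refl 0, le_of_lt hδ0⟩ ⟨hv.1, h⟩ hv.1
      simp only [mul_zero, sub_zero] at this
      have habs : -c ≤ |c| := neg_le_abs c
      have hCc : |c| ≤ C := le_max_left _ _
      nlinarith [hv.1]
    · have h0 : |f 0| ≤ M₀ := by
        have := hM₀ 0 ⟨le_refl _, by norm_num⟩; rwa [Real.norm_eq_abs] at this
      have h1 : |f v| ≤ M₀ := by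
        have := hM₀ v hv; rwa [Real.norm_eq_abs] at this
      have hCd : 2 * M₀ / δ ≤ C := le_max_right _ _
      have key : 2 * M₀ ≤ (2 * M₀ / δ) * v := by
        rw [div_mul_eq_mul_div, le_div_iff₀ hδ0]
        nlinarith [h.le]
      have habs0 := abs_le.mp h0
      have habs1 := abs_le.mp h1
      nlinarith [hv.1]
  -- Claim B : f 2 - f v ≤ M₁ * (2 - v) on [1, 2]
  have claimB : ∀ v ∈ Set.Icc (1:ℝ) 2, f 2 - f v ≤ M₁ * (2 - v) := by
    intro v hv
    have := hmonoB hv ⟨one_le_two, le_refl 2⟩ hv.2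
    simp only at this
    linarith
  -- the key inequality
  have key : ∀ s : ℝ, 0 ≤ s → s ≤ 1 → f 2 + f 0 - f (2 - 2 * s) - f (2 * s) ≤ K * s := by
    intro s hs0 hs1
    rcases le_or_gt s (1/2) with h | h
    · have hA := claimA (2 * s) ⟨by linarith, by linarith⟩
      have hB := claimB (2 - 2 * s) ⟨by linarith, by linarith⟩
      nlinarith
    · have b0 : |f 0| ≤ M₀ := by
        have := hM₀ 0 ⟨le_refl _, by norm_num⟩; rwa [Real.norm_eq_abs] at this
      have b2 : |f 2| ≤ M₀ := by
        have := hM₀ 2 ⟨by norm_num, le_refl _⟩; rwa [Real.norm_eq_abs] at this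
      have b3 : |f (2 - 2 * s)| ≤ M₀ := by
        have := hM₀ (2 - 2 * s) ⟨by linarith, by linarith⟩
        rwa [Real.norm_eq_abs] at this
      have b4 : |f (2 * s)| ≤ M₀ := by
        have := hM₀ (2 * s) ⟨by linarith, by linarith⟩
        rwa [Real.norm_eq_abs] at this
      have e0 := abs_le.mp b0
      have e2 := abs_le.mp b2
      have e3 := abs_le.mp b3
      have e4 := abs_le.mp b4
      nlinarith
  -- the instance
  refine ⟨2, le_refl 2, ![K / 2, 0], ![1/2, 1/2], ⟨?_, ?_⟩, ?_, 1, one_pos,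
    ![1, 0], ⟨?_, ?_⟩, ?_, ⟨1, rfl⟩⟩
  · intro i; fin_cases i <;> norm_num
  · simp [Fin.sum_univ_two]; norm_num
  · intro i; fin_cases i <;> norm_num
  · intro i; fin_cases i <;> norm_num
  · simp [Fin.sum_univ_two]
  · intro p' hp'
    obtain ⟨hpos, hsum⟩ := hp'
    rw [Fin.sum_univ_two] at hsum
    set s : ℝ := p' 1 with hs
    have hs0 : 0 ≤ s := hpos 1
    have hs1 : s ≤ 1 := by have := hpos 0; linarith
    have hp0 : p' 0 = 1 - s := by linarith
    have hks := key s hs0 hs1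
    simp only [obj, Fin.sum_univ_two, Matrix.cons_val_zero, Matrix.cons_val_one,
      Matrix.head_cons, hp0]
    have e1 : (1 - s) / (1/2 : ℝ) = 2 - 2 * s := by ring
    have e2 : s / (1/2 : ℝ) = 2 * s := by ring
    have e3 : (1 : ℝ) / (1/2 : ℝ) = 2 := by norm_num
    have e4 : (0 : ℝ) / (1/2 : ℝ) = 0 := by norm_num
    rw [e1, e2, e3, e4]
    ring_nf
    ring_nf at hks
    linarith
end

section
/- Let f : [0,∞) → ℝ be continuous on [0,∞) and continuously differentiable on (0,∞). Fix n ≥ 1, r ∈ ℝⁿ, q ∈ Δⁿ with qᵢ > 0 for all i, and β > 0, and let p be a maximizer of g(p) = Σᵢ rᵢ pᵢ − β Σᵢ qᵢ f(pᵢ/qᵢ) over Δⁿ satisfying pᵢ > 0 for all i ∈ {1,…,n}. Then for all indices i, j ∈ {1,…,n}, rᵢ − rⱼ = β f'(pᵢ/qᵢ) − β f'(pⱼ/qⱼ). -/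
open Finset

/-- first-order condition underlying the f-DPO loss: at any
fully-interior maximizer `p` of `g` over the simplex,
`rᵢ − rⱼ = β f'(pᵢ/qᵢ) − β f'(pⱼ/qⱼ)` for all `i, j`. -/
theorem stmt6 (f : ℝ → ℝ)
    (hf_cont : ContinuousOn f (Set.Ici 0))
    (hf_diff : ∀ t ∈ Set.Ioi (0 : ℝ), DifferentiableAt ℝ f t)
    (hf_deriv_cont : ContinuousOn (deriv f) (Set.Ioi 0))
    (n : ℕ) (hn : 1 ≤ n) (r q : Fin n → ℝ)
    (hq : q ∈ simplex n) (hq_pos : ∀ i, 0 < q i)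
    (β : ℝ) (hβ : 0 < β)
    (p : Fin n → ℝ) (hp : p ∈ simplex n)
    (hmax : ∀ p' ∈ simplex n, obj n r q β f p' ≤ obj n r q β f p)
    (hpos : ∀ i, 0 < p i) :
    ∀ i j : Fin n,
      r i - r j = β * deriv f (p i / q i) - β * deriv f (p j / q j) := by
  intro i j
  rcases eq_or_ne i j with rfl | hij
  · ring
  set A := deriv f (p i / q i) with hA
  set B := deriv f (p j / q j) with hB
  set pt : ℝ → Fin n → ℝ :=
    fun t k => if k = i then p i + t else if k = j then p j - t else p k with hpt
  have hpt0 : pt 0 = p := by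
    funext k
    simp only [hpt]
    split_ifs with h1 h2
    · subst h1; ring
    · subst h2; ring
    · rfl
  -- derivative of the linear part
  have hd1 : HasDerivAt (fun t => ∑ k, r k * pt t k) (r i - r j) 0 := by
    have hterm : ∀ k : Fin n, HasDerivAt (fun t => r k * pt t k)
        ((if k = i then r i else 0) + (if k = j then -r j else 0)) 0 := by
      intro k
      rcases eq_or_ne k i with rfl | hki
      · have : HasDerivAt (fun t : ℝ => r k * (p k + t)) (r k * 1) 0 :=
          ((hasDerivAt_id 0).const_add (p k)).const_mul (r k)
        simpa [hpt, hij] using this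
      rcases eq_or_ne k j with rfl | hkj
      · have : HasDerivAt (fun t : ℝ => r k * (p k - t)) (r k * (-1)) 0 :=
          ((hasDerivAt_id 0).const_sub (p k)).const_mul (r k)
        simpa [hpt, hki] using this
      · have : HasDerivAt (fun _ : ℝ => r k * p k) 0 0 := hasDerivAt_const _ _
        simpa [hpt, hki, hkj] using this
    have := HasDerivAt.fun_sum (fun k (_ : k ∈ Finset.univ) => hterm k)
    have hsum : ∑ k : Fin n, ((if k = i then r i else 0) + (if k = j then -r j else 0))
        = r i - r j := by
      rw [Finset.sum_add_distrib]
      simp [Finset.sum_ite_eq']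
      ring
    rwa [hsum] at this
  -- derivative of the penalty part
  have hdivi : (0 : ℝ) < p i / q i := div_pos (hpos i) (hq_pos i)
  have hdivj : (0 : ℝ) < p j / q j := div_pos (hpos j) (hq_pos j)
  have hd2 : HasDerivAt (fun t => ∑ k, q k * f (pt t k / q k)) (A - B) 0 := by
    have hterm : ∀ k : Fin n, HasDerivAt (fun t => q k * f (pt t k / q k))
        ((if k = i then A else 0) + (if k = j then -B else 0)) 0 := by
      intro k
      rcases eq_or_ne k i with rfl | hki
      · have hinner : HasDerivAt (fun t : ℝ => (p k + t) / q k) (1 / q k) 0 :=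
          ((hasDerivAt_id 0).const_add (p k)).div_const (q k)
        have hfd : HasDerivAt f A ((p k + (0:ℝ)) / q k) := by
          rw [show (p k + (0:ℝ)) / q k = p k / q k by ring]
          exact (hf_diff _ hdivi).hasDerivAt
        have hcomp := (hfd.comp 0 hinner).const_mul (q k)
        have : q k * (A * (1 / q k)) = A := by
          field_simp
          rw [mul_comm, mul_div_assoc, div_self (hq_pos k).ne', mul_one]
        rw [this] at hcomp
        simpa [hpt, hij, Function.comp] using hcomp
      rcases eq_or_ne k j with rfl | hkj
      · have hinner : HasDerivAt (fun t : ℝ => (p k - t) / q k) (-1 / q k) 0 :=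
          ((hasDerivAt_id 0).const_sub (p k)).div_const (q k)
        have hfd : HasDerivAt f B ((p k - (0:ℝ)) / q k) := by
          rw [show (p k - (0:ℝ)) / q k = p k / q k by ring]
          exact (hf_diff _ hdivj).hasDerivAt
        have hcomp := (hfd.comp 0 hinner).const_mul (q k)
        have : q k * (B * (-1 / q k)) = -B := by
          field_simp
          rw [mul_comm, mul_div_assoc, div_self (hq_pos k).ne', mul_one]
        rw [this] at hcomp
        simpa [hpt, hki, Function.comp] using hcomp
      · have : HasDerivAt (fun _ : ℝ => q k * f (p k / q k)) 0 0 := hasDerivAt_const _ _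
        simpa [hpt, hki, hkj] using this
    have := HasDerivAt.fun_sum (fun k (_ : k ∈ Finset.univ) => hterm k)
    have hsum : ∑ k : Fin n, ((if k = i then A else 0) + (if k = j then -B else 0))
        = A - B := by
      rw [Finset.sum_add_distrib]
      simp [Finset.sum_ite_eq']
      ring
    rwa [hsum] at this
  have hderiv : HasDerivAt (fun t => obj n r q β f (pt t))
      ((r i - r j) - β * (A - B)) 0 := by
    simpa [obj] using hd1.fun_sub (hd2.const_mul β)
  -- local maximality at 0
  have hloc : IsLocalMax (fun t => obj n r q β f (pt t)) 0 := by
    have hε : (0:ℝ) < min (p i) (p j) := lt_min (hpos i) (hpos j)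
    filter_upwards [Metric.ball_mem_nhds 0 hε] with t ht
    have habs : |t| < min (p i) (p j) := by
      simpa [Real.dist_eq] using ht
    have h1 := (abs_lt.1 habs).1
    have h2 := (abs_lt.1 habs).2
    have hmem : pt t ∈ simplex n := by
      constructor
      · intro k
        simp only [hpt]
        split_ifs with hk1 hk2
        · subst hk1
          have : -(p k) < t := lt_of_le_of_lt (by simp [min_le_left]) h1
          linarith
        · subst hk2
          have : t < p k := lt_of_lt_of_le h2 (min_le_right _ _)
          linarith
        · exact (hpos k).le
      · have heq : ∀ k : Fin n, pt t k
            = p k + ((if k = i then t else 0) + (if k = j then -t else 0)) := by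
          intro k
          rcases eq_or_ne k i with rfl | hk1
          · have hkj : k ≠ j := hij
            simp [hpt, hkj]
          · rcases eq_or_ne k j with rfl | hk2
            · simp [hpt, hk1, sub_eq_add_neg]
            · simp [hpt, hk1, hk2]
        rw [Finset.sum_congr rfl (fun k _ => heq k)]
        rw [Finset.sum_add_distrib, Finset.sum_add_distrib]
        simp [Finset.sum_ite_eq', hp.2]
    show obj n r q β f (pt t) ≤ obj n r q β f (pt 0)
    rw [hpt0]
    exact hmax _ hmem
  have hzero := hloc.hasDerivAt_eq_zero hderiv
  have : r i - r j = β * (A - B) := by linarith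
  rw [this]; ring
end

section
/- Let f : [0,∞) → ℝ be continuous on [0,∞) and continuously differentiable on (0,∞), and suppose that for every a > 0 and every M ∈ ℝ there exists t ∈ (0,a) with (f(t) − f(0))/t < M. Fix n ≥ 1, a nonempty subset S ⊆ {1,…,n}, r ∈ ℝⁿ, q ∈ Δⁿ with qᵢ > 0 for all i, and β > 0, and define the partial-sum objective h(p) = Σᵢ rᵢ pᵢ − β Σ_{i∈S} qᵢ f(pᵢ/qᵢ) for p ∈ Δⁿ. Then every maximizer p of h over Δⁿ satisfies pᵢ > 0 for all i ∈ S. -/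
open Finset

/-- The partial-sum objective `h(p) = Σᵢ rᵢ pᵢ − β Σ_{i∈S} qᵢ f(pᵢ/qᵢ)`, where
the regularization term runs only over in-sample indices `S`. -/
noncomputable def pobj (n : ℕ) (S : Finset (Fin n)) (r q : Fin n → ℝ) (β : ℝ)
    (f : ℝ → ℝ) (p : Fin n → ℝ) : ℝ :=
  (∑ i, r i * p i) - β * ∑ i ∈ S, q i * f (p i / q i)

set_option maxHeartbeats 1000000 in
/-- if the ratio `(f(t) − f(0))/t` is not bounded from below in any
right neighborhood of `0`, then every maximizer of the partial-sum objective `h`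
over the simplex assigns strictly positive probability to all in-sample indices
`i ∈ S`. -/
theorem stmt7 (f : ℝ → ℝ)
    (hf_cont : ContinuousOn f (Set.Ici 0))
    (hf_diff : ∀ t ∈ Set.Ioi (0 : ℝ), DifferentiableAt ℝ f t)
    (hf_deriv_cont : ContinuousOn (deriv f) (Set.Ioi 0))
    (hratio : ∀ a > (0 : ℝ), ∀ M : ℝ, ∃ t : ℝ, 0 < t ∧ t < a ∧ (f t - f 0) / t < M)
    (n : ℕ) (hn : 1 ≤ n) (S : Finset (Fin n)) (hS : S.Nonempty)
    (r q : Fin n → ℝ)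
    (hq : q ∈ simplex n) (hq_pos : ∀ i, 0 < q i)
    (β : ℝ) (hβ : 0 < β)
    (p : Fin n → ℝ) (hp : p ∈ simplex n)
    (hmax : ∀ p' ∈ simplex n, pobj n S r q β f p' ≤ pobj n S r q β f p) :
    ∀ i ∈ S, 0 < p i := by
  intro i hiS
  by_contra hpi
  push_neg at hpi
  have hpi0 : p i = 0 := le_antisymm hpi (hp.1 i)
  have hsum : ∑ k, p k = 1 := hp.2
  obtain ⟨j, hj0⟩ : ∃ j, p j ≠ 0 := by
    by_contra h
    push_neg at h
    simp [h] at hsum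
  have hpj : 0 < p j := lt_of_le_of_ne (hp.1 j) (Ne.symm hj0)
  have hij : i ≠ j := by rintro rfl; exact hj0 hpi0
  set x := p j / q j with hxdef
  have hx : 0 < x := div_pos hpj (hq_pos j)
  -- local Lipschitz-type bound near x from differentiability
  obtain ⟨c, hc, hcw⟩ := ((hf_diff x hx).hasFDerivAt.isBigO_sub).exists_pos
  have hbound' := hcw.bound
  rw [Metric.eventually_nhds_iff] at hbound'
  obtain ⟨δ, hδ, hballs⟩ := hbound'
  -- pick t from the ratio condition
  obtain ⟨t, ht0, hta, htM⟩ := hratio (min (p j / q i) (δ * q j / q i))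
    (lt_min (div_pos hpj (hq_pos i)) (div_pos (mul_pos hδ (hq_pos j)) (hq_pos i)))
    ((r i - r j - β * c) / β)
  set ε := t * q i with hεdef
  have hε0 : 0 < ε := mul_pos ht0 (hq_pos i)
  have hεpj : ε < p j := by
    have h1 : t < p j / q i := lt_of_lt_of_le hta (min_le_left _ _)
    exact (lt_div_iff₀ (hq_pos i)).mp h1
  have hεδ : ε / q j < δ := by
    have h1 : t < δ * q j / q i := lt_of_lt_of_le hta (min_le_right _ _)
    have h2 : ε < δ * q j := (lt_div_iff₀ (hq_pos i)).mp h1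
    exact (div_lt_iff₀ (hq_pos j)).mpr (by linarith [mul_comm δ (q j)])
  set p' := Function.update (Function.update p j (p j - ε)) i ε with hp'def
  have hp'i : p' i = ε := by rw [hp'def]; simp
  have hp'j : p' j = p j - ε := by
    rw [hp'def, Function.update_of_ne (Ne.symm hij), Function.update_self]
  have hp'k : ∀ k, k ≠ i → k ≠ j → p' k = p k := by
    intro k hki hkj
    rw [hp'def, Function.update_of_ne hki, Function.update_of_ne hkj]
  -- summation helper over univ
  have keyU : ∀ F : Fin n → ℝ, (∀ k, k ≠ i → k ≠ j → F k = 0) → ∑ k, F k = F i + F j := by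
    intro F hF
    rw [← Finset.sum_subset (Finset.subset_univ ({i, j} : Finset (Fin n)))
      (fun k _ hk => hF k (fun h => hk (by simp [h])) (fun h => hk (by simp [h])))]
    exact Finset.sum_pair hij
  -- summation helper over S
  have keyS : ∀ F : Fin n → ℝ, (∀ k, k ≠ i → k ≠ j → F k = 0) →
      ∑ k ∈ S, F k = F i + (if j ∈ S then F j else 0) := by
    intro F hF
    by_cases hjS : j ∈ S
    · rw [if_pos hjS, ← Finset.sum_pair hij]
      refine (Finset.sum_subset ?_ (fun k _ hk =>
        hF k (fun h => hk (by simp [h])) (fun h => hk (by simp [h])))).symm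
      intro k hk
      simp only [Finset.mem_insert, Finset.mem_singleton] at hk
      rcases hk with rfl | rfl <;> assumption
    · rw [if_neg hjS, add_zero]
      exact Finset.sum_eq_single_of_mem i hiS
        (fun k hk hki => hF k hki (fun h => hjS (h ▸ hk)))
  -- p' is in the simplex
  have hp'mem : p' ∈ simplex n := by
    constructor
    · intro k
      by_cases hk1 : k = i
      · rw [hk1, hp'i]; exact hε0.le
      by_cases hk2 : k = j
      · rw [hk2, hp'j]; linarith
      · rw [hp'k k hk1 hk2]; exact hp.1 k
    · have hz : ∑ k, (p' k - p k) = 0 := by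
        rw [keyU _ (fun k h1 h2 => by rw [hp'k k h1 h2]; ring), hp'i, hp'j, hpi0]
        ring
      rw [Finset.sum_sub_distrib, hsum] at hz
      linarith
  -- linear part difference
  have hlin : (∑ k, r k * p' k) - ∑ k, r k * p k = r i * ε - r j * ε := by
    rw [← Finset.sum_sub_distrib,
      keyU _ (fun k h1 h2 => by rw [hp'k k h1 h2]; ring), hp'i, hp'j, hpi0]
    ring
  -- regularization part difference
  set T : ℝ := if j ∈ S then q j * f ((p j - ε) / q j) - q j * f x else 0 with hTdef
  have hreg : (∑ k ∈ S, q k * f (p' k / q k)) - ∑ k ∈ S, q k * f (p k / q k)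
      = (q i * f (ε / q i) - q i * f 0) + T := by
    rw [← Finset.sum_sub_distrib,
      keyS _ (fun k h1 h2 => by rw [hp'k k h1 h2]; ring), hp'i, hp'j, hpi0, zero_div]
  -- bound the j-term
  have hTbound : T ≤ c * ε := by
    rw [hTdef]
    split_ifs with hjS
    · have hy : (p j - ε) / q j - x = -(ε / q j) := by
        rw [hxdef]
        ring
      have hdist : dist ((p j - ε) / q j) x < δ := by
        rw [Real.dist_eq, hy, abs_neg, abs_of_pos (div_pos hε0 (hq_pos j))]
        exact hεδ
      have hfb := hballs hdist
      rw [Real.norm_eq_abs, Real.norm_eq_abs, hy, abs_neg,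
        abs_of_pos (div_pos hε0 (hq_pos j))] at hfb
      have h1 : f ((p j - ε) / q j) - f x ≤ c * (ε / q j) := (abs_le.mp hfb).2
      have h2 := mul_le_mul_of_nonneg_left h1 (hq_pos j).le
      have h4 : ε / q j * q j = ε := div_mul_cancel₀ ε (hq_pos j).ne'
      have h3 : q j * (c * (ε / q j)) = c * ε := by
        linear_combination c * h4
      nlinarith [h2, h3]
    · nlinarith [hc, hε0]
  -- key strict inequality at i
  have heqt : ε / q i = t := mul_div_cancel_right₀ t (hq_pos i).ne'
  have hβM : β * ((r i - r j - β * c) / β) = r i - r j - β * c :=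
    mul_div_cancel₀ _ hβ.ne'
  have htM' : f t - f 0 < ((r i - r j - β * c) / β) * t := (div_lt_iff₀ ht0).mp htM
  have hkey : β * (f t - f 0) < (r i - r j - β * c) * t := by
    have := mul_lt_mul_of_pos_left htM' hβ
    rw [← mul_assoc, hβM] at this
    exact this
  -- objective difference
  have hED : pobj n S r q β f p' - pobj n S r q β f p
      = (r i * ε - r j * ε) - β * ((q i * f (ε / q i) - q i * f 0) + T) := by
    simp only [pobj]
    rw [← hlin, ← hreg]
    ring
  have hle := hmax p' hp'mem
  rw [heqt] at hED
  have h5 : r i * ε - r j * ε - β * (q i * f t - q i * f 0 + T) ≤ 0 := by linarith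
  have h6 : β * T ≤ β * (c * ε) := mul_le_mul_of_nonneg_left hTbound hβ.le
  have h7 : q i * (β * (f t - f 0)) < q i * ((r i - r j - β * c) * t) :=
    mul_lt_mul_of_pos_left hkey (hq_pos i)
  have h8 : r i * ε = r i * (t * q i) := by rw [hεdef]
  have h9 : r j * ε = r j * (t * q i) := by rw [hεdef]
  have h11 : β * (c * ε) = β * (c * (t * q i)) := by rw [hεdef]
  nlinarith [h5, h6, h7, h8, h9, h11]
end

section
/- Let f : [0,∞) → ℝ be continuous on [0,∞) and continuously differentiable on (0,∞). Fix n ≥ 1, a subset S ⊆ {1,…,n}, r ∈ ℝⁿ, q ∈ Δⁿ with qᵢ > 0 for all i, and β > 0, and define h(p) = Σᵢ rᵢ pᵢ − β Σ_{i∈S} qᵢ f(pᵢ/qᵢ). Let p be a maximizer of h over Δⁿ with pᵢ > 0 for all i ∈ S. Then for all indices i, j ∈ S, rᵢ − rⱼ = β f'(pᵢ/qᵢ) − β f'(pⱼ/qⱼ). In particular, the first-order conditions at maximizers of the partial-sum objective coincide on S with those at fully-interior maximizers of the full objective g(p) = Σᵢ rᵢ pᵢ − β Σᵢ qᵢ f(pᵢ/qᵢ),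 so both yield the same f-DPO loss upon substitution into the Bradley–Terry model. -/
open Finset

/-- at any maximizer `p` of the partial-sum objective `h` over the
simplex which is positive on `S`, the first-order condition
`rᵢ − rⱼ = β f'(pᵢ/qᵢ) − β f'(pⱼ/qⱼ)` holds for all `i, j ∈ S` — the same
condition obtained at fully-interior maximizers of the full objective, so both
yield the same f-DPO loss upon substitution into the Bradley–Terry model. -/
theorem stmt8 (f : ℝ → ℝ)
    (hf_cont : ContinuousOn f (Set.Ici 0))
    (hf_diff : ∀ t ∈ Set.Ioi (0 : ℝ), DifferentiableAt ℝ f t)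
    (hf_deriv_cont : ContinuousOn (deriv f) (Set.Ioi 0))
    (n : ℕ) (hn : 1 ≤ n) (S : Finset (Fin n))
    (r q : Fin n → ℝ)
    (hq : q ∈ simplex n) (hq_pos : ∀ i, 0 < q i)
    (β : ℝ) (hβ : 0 < β)
    (p : Fin n → ℝ) (hp : p ∈ simplex n)
    (hmax : ∀ p' ∈ simplex n, pobj n S r q β f p' ≤ pobj n S r q β f p)
    (hpos : ∀ i ∈ S, 0 < p i) :
    ∀ i ∈ S, ∀ j ∈ S,
      r i - r j = β * deriv f (p i / q i) - β * deriv f (p j / q j) := by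
  intro i hi j hj
  rcases eq_or_ne i j with rfl | hij
  · ring
  set c : Fin n → ℝ := fun k => (if k = i then (1:ℝ) else 0) - (if k = j then 1 else 0)
    with hc
  have hci : c i = 1 := by simp [hc, hij]
  have hcj : c j = -1 := by simp [hc, Ne.symm hij]
  have hck : ∀ k, k ≠ i → k ≠ j → c k = 0 := by
    intro k h1 h2; simp [hc, h1, h2]
  have hpi := hpos i hi
  have hpj := hpos j hj
  set φ : ℝ → ℝ := fun t =>
    (∑ k, r k * (p k + t * c k)) - β * ∑ k ∈ S, q k * f ((p k + t * c k) / q k)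
    with hφ
  -- derivative of φ at 0
  have hA : HasDerivAt (fun t : ℝ => ∑ k, r k * (p k + t * c k))
      (∑ k, r k * c k) 0 := by
    apply HasDerivAt.fun_sum
    intro k _
    have hlin : HasDerivAt (fun t : ℝ => p k + t * c k) (c k) 0 := by
      simpa using ((hasDerivAt_id (0:ℝ)).mul_const (c k)).const_add (p k)
    simpa using hlin.const_mul (r k)
  have hB : HasDerivAt (fun t : ℝ => ∑ k ∈ S, q k * f ((p k + t * c k) / q k))
      (∑ k ∈ S, deriv f (p k / q k) * c k) 0 := by
    apply HasDerivAt.fun_sum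
    intro k hk
    have hlin : HasDerivAt (fun t : ℝ => p k + t * c k) (c k) 0 := by
      simpa using ((hasDerivAt_id (0:ℝ)).mul_const (c k)).const_add (p k)
    have hdiv : HasDerivAt (fun t : ℝ => (p k + t * c k) / q k) (c k / q k) 0 :=
      hlin.div_const (q k)
    have hmem : p k / q k ∈ Set.Ioi (0:ℝ) := div_pos (hpos k hk) (hq_pos k)
    have hfk : HasDerivAt f (deriv f (p k / q k)) ((p k + (0:ℝ) * c k) / q k) := by
      have h0 : (p k + (0:ℝ) * c k) / q k = p k / q k := by ring
      rw [h0]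
      exact (hf_diff _ hmem).hasDerivAt
    have hcomp := hfk.comp 0 hdiv
    have := hcomp.const_mul (q k)
    have hqk : (q k) ≠ 0 := (hq_pos k).ne'
    have heq : q k * (deriv f (p k / q k) * (c k / q k))
        = deriv f (p k / q k) * c k := by
      field_simp
    rw [heq] at this
    exact this
  have hφd : HasDerivAt φ
      ((∑ k, r k * c k) - β * ∑ k ∈ S, deriv f (p k / q k) * c k) 0 :=
    hA.sub (hB.const_mul β)
  -- local max at 0
  have hεpos : 0 < min (p i) (p j) := lt_min hpi hpj
  have hloc : IsLocalMax φ 0 := by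
    have : ∀ t ∈ Metric.ball (0:ℝ) (min (p i) (p j)), φ t ≤ φ 0 := by
      intro t ht
      rw [Metric.mem_ball, Real.dist_eq, sub_zero] at ht
      have hmemS : (fun k => p k + t * c k) ∈ simplex n := by
        constructor
        · intro k
          show 0 ≤ p k + t * c k
          rcases eq_or_ne k i with rfl | hki
          · rw [hci]
            have : |t| < p k := lt_of_lt_of_le ht (min_le_left _ _)
            have := neg_abs_le t
            simp only [mul_one]
            linarith
          · rcases eq_or_ne k j with rfl | hkj
            · rw [hcj]
              have : |t| < p k := lt_of_lt_of_le ht (min_le_right _ _)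
              have := le_abs_self t
              nlinarith
            · rw [hck k hki hkj]
              simpa using hp.1 k
        · show ∑ k, (p k + t * c k) = 1
          have hsumc : ∑ k, c k = 0 := by
            simp [hc, Finset.sum_sub_distrib]
          calc ∑ k, (p k + t * c k) = (∑ k, p k) + t * ∑ k, c k := by
                rw [Finset.sum_add_distrib, Finset.mul_sum]
            _ = 1 := by rw [hp.2, hsumc]; ring
      have h1 : φ t = pobj n S r q β f (fun k => p k + t * c k) := rfl
      have h2 : φ 0 = pobj n S r q β f p := by
        simp [hφ, pobj]
      rw [h1, h2]
      exact hmax _ hmemS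
    exact Filter.eventually_iff_exists_mem.2
      ⟨Metric.ball 0 (min (p i) (p j)), Metric.ball_mem_nhds _ hεpos, this⟩
  have hzero := hloc.hasDerivAt_eq_zero hφd
  have hsum1 : ∑ k, r k * c k = r i - r j := by
    simp [hc, mul_sub, mul_ite, Finset.sum_sub_distrib]
  have hsum2 : ∑ k ∈ S, deriv f (p k / q k) * c k
      = deriv f (p i / q i) - deriv f (p j / q j) := by
    simp [hc, mul_sub, mul_ite, Finset.sum_sub_distrib, hi, hj]
  rw [hsum1, hsum2] at hzero
  linear_combination hzero
end

section
/- Let f : [0,∞) → ℝ have a unique global minimizer c ∈ (0,1], i.e., f(c) < f(t) for all t ∈ [0,∞) with t ≠ c (the paper additionally assumes the DPO-inducing condition: for every a > 0 and M ∈ ℝ there exists t ∈ (0,a) with (f(t) − f(0))/t < M). Fix n ≥ 2, a strict subset S ⊊ {1,…,n}, r ∈ ℝⁿ, q ∈ Δⁿ with qᵢ > 0 for all i, and β > 0, and suppose rᵢ ≤ max_{j∉S} rⱼ for all i ∈ S. Then every maximizer p of h(p) = Σᵢ rᵢ pᵢ − β Σ_{i∈S} qᵢ f(pᵢ/qᵢ)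 over Δⁿ satisfies pᵢ ≤ c · qᵢ for every i ∈ S. -/
open Finset

/-- likelihood displacement: if `f` is DPO-inducing with unique
global minimizer `c ∈ (0,1]`, and every in-sample reward is at most the maximal
out-of-sample reward, then every maximizer `p` of the partial-sum objective over
the simplex satisfies `pᵢ ≤ c qᵢ` for all `i ∈ S`. -/
theorem stmt9 (f : ℝ → ℝ) (c : ℝ) (hc0 : 0 < c) (hc1 : c ≤ 1)
    (hmin : ∀ t : ℝ, 0 ≤ t → t ≠ c → f c < f t)
    (hratio : ∀ a > (0 : ℝ), ∀ M : ℝ, ∃ t : ℝ, 0 < t ∧ t < a ∧ (f t - f 0) / t < M)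
    (n : ℕ) (hn : 2 ≤ n) (S : Finset (Fin n)) (hS : S ⊂ Finset.univ)
    (hSc : (Sᶜ : Finset (Fin n)).Nonempty)
    (r q : Fin n → ℝ)
    (hq : q ∈ simplex n) (hq_pos : ∀ i, 0 < q i)
    (β : ℝ) (hβ : 0 < β)
    (hr : ∀ i ∈ S, r i ≤ (Sᶜ : Finset (Fin n)).sup' hSc r)
    (p : Fin n → ℝ) (hp : p ∈ simplex n)
    (hmax : ∀ p' ∈ simplex n, pobj n S r q β f p' ≤ pobj n S r q β f p) :
    ∀ i ∈ S, p i ≤ c * q i := by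
  intro i hi
  by_contra hgt
  push_neg at hgt
  obtain ⟨hp_nn, hp_sum⟩ := hp
  obtain ⟨j, hj, hjmax⟩ := Finset.exists_mem_eq_sup' hSc r
  have hji : j ≠ i := by
    intro h; subst h; exact (Finset.mem_compl.mp hj) hi
  set δ : ℝ := p i - c * q i with hδ
  have hδpos : 0 < δ := by simp [hδ]; linarith
  set p' : Fin n → ℝ :=
    Function.update (Function.update p i (c * q i)) j (p j + δ) with hp'
  have hp'i : p' i = c * q i := by
    simp [hp', Function.update_of_ne (Ne.symm hji), Function.update_self]
  have hp'j : p' j = p j + δ := by simp [hp']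
  have hp'k : ∀ k, k ≠ i → k ≠ j → p' k = p k := by
    intro k hki hkj
    simp [hp', Function.update_of_ne hkj, Function.update_of_ne hki]
  -- sums over {i, j}
  have hij : i ≠ j := Ne.symm hji
  have pairdiff : ∀ g : Fin n → ℝ,
      ∑ k, (g k * p' k - g k * p k)
        = g i * (c * q i - p i) + g j * δ := by
    intro g
    have h1 : ∑ k, (g k * p' k - g k * p k)
        = ∑ k ∈ ({i, j} : Finset (Fin n)), (g k * p' k - g k * p k) := by
      refine (Finset.sum_subset (Finset.subset_univ _) ?_).symm
      intro k _ hk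
      simp only [Finset.mem_insert, Finset.mem_singleton, not_or] at hk
      rw [hp'k k hk.1 hk.2]; ring
    rw [h1, Finset.sum_pair hij, hp'i, hp'j]
    ring
  have hsum' : ∑ k, p' k = 1 := by
    have := pairdiff (fun _ => 1)
    simp only [one_mul] at this
    have h2 : ∑ k, (p' k - p k) = (c * q i - p i) + δ := this
    rw [Finset.sum_sub_distrib, hp_sum] at h2
    have : (c * q i - p i) + δ = 0 := by simp [hδ]
    linarith
  have hp'simplex : p' ∈ simplex n := by
    refine ⟨fun k => ?_, hsum'⟩
    rcases eq_or_ne k i with rfl | hki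
    · rw [hp'i]; exact mul_nonneg hc0.le (hq_pos _).le
    rcases eq_or_ne k j with rfl | hkj
    · rw [hp'j]; have := hp_nn k; linarith
    · rw [hp'k k hki hkj]; exact hp_nn k
  -- reward sum difference
  have hrdiff : ∑ k, r k * p' k - ∑ k, r k * p k
      = r i * (c * q i - p i) + r j * δ := by
    rw [← Finset.sum_sub_distrib]; exact pairdiff r
  -- regularization sum
  have hqine : q i ≠ 0 := (hq_pos i).ne'
  have hreg : ∑ k ∈ S, q k * f (p' k / q k)
      = ∑ k ∈ S, q k * f (p k / q k) + q i * (f c - f (p i / q i)) := by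
    rw [← Finset.add_sum_erase S _ hi, ← Finset.add_sum_erase S (fun k => q k * f (p k / q k)) hi]
    have herase : ∑ k ∈ S.erase i, q k * f (p' k / q k)
        = ∑ k ∈ S.erase i, q k * f (p k / q k) := by
      refine Finset.sum_congr rfl fun k hk => ?_
      have hki : k ≠ i := Finset.ne_of_mem_erase hk
      have hkj : k ≠ j := by
        intro h; subst h
        exact (Finset.mem_compl.mp hj) (Finset.mem_of_mem_erase hk)
      rw [hp'k k hki hkj]
    rw [herase, hp'i, mul_div_assoc, div_self hqine, mul_one]
    ring
  -- strict improvement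
  have hfc : f c < f (p i / q i) := by
    refine hmin _ (div_nonneg (hp_nn i) (hq_pos i).le) ?_
    intro h
    have : p i = c * q i := by
      field_simp at h; linarith [h]
    linarith
  have hri : r i ≤ r j := hjmax ▸ hr i hi
  have hkey : pobj n S r q β f p < pobj n S r q β f p' := by
    unfold pobj
    rw [hreg]
    have h1 : r i * (c * q i - p i) + r j * δ = (r j - r i) * δ := by
      simp only [hδ]; ring
    have h2 : (r j - r i) * δ ≥ 0 := mul_nonneg (by linarith) hδpos.le
    have h3 : 0 < β * (q i * (f (p i / q i) - f c)) := by
      apply mul_pos hβ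
      exact mul_pos (hq_pos i) (by linarith)
    have := hrdiff
    nlinarith [this]
  exact absurd (hmax p' hp'simplex) (not_le.mpr hkey)
end

section
/- Let f : [0,∞) → ℝ be convex, continuous on [0,∞), and differentiable on (0,∞), and assume f' : (0,∞) → ℝ is a strictly increasing bijection onto ℝ, with inverse (f')⁻¹ : ℝ → (0,∞). Fix n ≥ 2, a strict subset S ⊊ {1,…,n}, r ∈ ℝⁿ, q ∈ Δⁿ with qᵢ > 0 for all i, and β > 0. Set r̂ = max_{i∉S} rᵢ and zᵢ = qᵢ (f')⁻¹((rᵢ − r̂)/β) for i ∈ S, and suppose Σ_{i∈S} zᵢ < 1. Then a vector p ∈ Δⁿ is a maximizer of h(p) = Σᵢ rᵢ pᵢ − β Σ_{i∈S} qᵢ f(pᵢ/qᵢ) over Δⁿ if and only if: pᵢ = zᵢ for all i ∈ S; pᵢ = 0 for all i ∉ S with rᵢ < r̂; and Σ_{i∉S, rᵢ = r̂} pᵢ = 1 − Σ_{i∈S} zᵢ. -/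
open Finset

/-- Strict subgradient inequality for a function convex on `[0,∞)` with strictly
monotone derivative on `(0,∞)`. -/
lemma subgrad_strict (f : ℝ → ℝ)
    (hf_cont : ContinuousOn f (Set.Ici 0))
    (hf_diff : ∀ t ∈ Set.Ioi (0 : ℝ), DifferentiableAt ℝ f t)
    (hmono : StrictMonoOn (deriv f) (Set.Ioi 0))
    {a b : ℝ} (ha : 0 ≤ a) (hb : 0 < b) (hne : a ≠ b) :
    f b + deriv f b * (a - b) < f a := by
  have hsc : StrictConvexOn ℝ (Set.Ici 0) f := by
    refine StrictMonoOn.strictConvexOn_of_deriv (convex_Ici 0) hf_cont ?_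
    rwa [interior_Ici]
  rcases lt_or_gt_of_ne hne with h | h
  · have hs := hsc.slope_lt_deriv (Set.mem_Ici.2 ha) (Set.mem_Ici.2 hb.le) h
      (hf_diff b (Set.mem_Ioi.2 hb))
    rw [slope_def_field, div_lt_iff₀ (by linarith)] at hs
    nlinarith
  · have hs := hsc.deriv_lt_slope (Set.mem_Ici.2 hb.le) (Set.mem_Ici.2 ha) h
      (hf_diff b (Set.mem_Ioi.2 hb))
    rw [slope_def_field, lt_div_iff₀ (by linarith)] at hs
    nlinarith

/-- optimal solutions of the partial-sum problem, first case:
for convex `f` whose derivative is a strictly increasing bijection from `(0,∞)`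
onto `ℝ` with inverse `finv`, setting `r̂ = max_{i∉S} rᵢ` and
`zᵢ = qᵢ (f')⁻¹((rᵢ − r̂)/β)`, if `Σ_{i∈S} zᵢ < 1` then `p ∈ Δⁿ` maximizes `h`
iff `pᵢ = zᵢ` on `S`, `pᵢ = 0` for out-of-sample `i` with `rᵢ < r̂`, and the mass
on out-of-sample indices attaining `r̂` is `1 − Σ_{i∈S} zᵢ`. -/
theorem stmt10 (f : ℝ → ℝ)
    (hconv : ConvexOn ℝ (Set.Ici 0) f)
    (hf_cont : ContinuousOn f (Set.Ici 0))
    (hf_diff : ∀ t ∈ Set.Ioi (0 : ℝ), DifferentiableAt ℝ f t)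
    (hmono : StrictMonoOn (deriv f) (Set.Ioi 0))
    (finv : ℝ → ℝ)
    (hfinv_pos : ∀ y : ℝ, 0 < finv y)
    (hfinv_right : ∀ y : ℝ, deriv f (finv y) = y)
    (hfinv_left : ∀ t : ℝ, 0 < t → finv (deriv f t) = t)
    (n : ℕ) (hn : 2 ≤ n) (S : Finset (Fin n)) (hS : S ⊂ Finset.univ)
    (hSc : (Sᶜ : Finset (Fin n)).Nonempty)
    (r q : Fin n → ℝ)
    (hq : q ∈ simplex n) (hq_pos : ∀ i, 0 < q i)
    (β : ℝ) (hβ : 0 < β)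
    (hz : ∑ i ∈ S, q i * finv ((r i - (Sᶜ : Finset (Fin n)).sup' hSc r) / β) < 1)
    (p : Fin n → ℝ) (hp : p ∈ simplex n) :
    (∀ p' ∈ simplex n, pobj n S r q β f p' ≤ pobj n S r q β f p) ↔
      ((∀ i ∈ S, p i = q i * finv ((r i - (Sᶜ : Finset (Fin n)).sup' hSc r) / β)) ∧
       (∀ i ∉ S, r i < (Sᶜ : Finset (Fin n)).sup' hSc r → p i = 0) ∧
       ∑ i ∈ Sᶜ.filter (fun i => r i = (Sᶜ : Finset (Fin n)).sup' hSc r), p i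
         = 1 - ∑ i ∈ S, q i * finv ((r i - (Sᶜ : Finset (Fin n)).sup' hSc r) / β)) := by
  classical
  set rh := (Sᶜ : Finset (Fin n)).sup' hSc r with hrh_def
  let z : Fin n → ℝ := fun i => q i * finv ((r i - rh) / β)
  have hzi : ∀ i : Fin n, q i * finv ((r i - rh) / β) = z i := fun _ => rfl
  simp only [hzi] at hz ⊢
  have hz_pos : ∀ i, 0 < z i := fun i => mul_pos (hq_pos i) (hfinv_pos _)
  have hle_rh : ∀ i ∈ Sᶜ, r i ≤ rh := fun i hi => Finset.le_sup' r hi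
  -- per-index strict bound
  have key : ∀ i ∈ S, ∀ t : ℝ, 0 ≤ t → t ≠ z i →
      (r i - rh) * t - β * (q i * f (t / q i)) <
        (r i - rh) * z i - β * (q i * f (z i / q i)) := by
    intro i _ t ht hne
    have hqi := hq_pos i
    have hzq : z i / q i = finv ((r i - rh) / β) :=
      mul_div_cancel_left₀ _ hqi.ne'
    have hbpos : 0 < z i / q i := by rw [hzq]; exact hfinv_pos _
    have hd : deriv f (z i / q i) = (r i - rh) / β := by rw [hzq, hfinv_right]
    have hane : t / q i ≠ z i / q i := fun hc => hne (by
      have h := congrArg (fun x : ℝ => x * q i) hc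
      simpa [div_mul_cancel₀, hqi.ne'] using h)
    have hsub := subgrad_strict f hf_cont hf_diff hmono
      (div_nonneg ht hqi.le) hbpos hane
    rw [hd] at hsub
    have h1 : 0 < β * q i := mul_pos hβ hqi
    have h2 := mul_lt_mul_of_pos_left hsub h1
    rw [mul_add] at h2
    have h3 : β * q i * ((r i - rh) / β * (t / q i - z i / q i))
        = (r i - rh) * (t - z i) := by field_simp
    rw [h3] at h2
    have h4 : β * q i * f (t / q i) = β * (q i * f (t / q i)) := by ring
    have h5 : β * q i * f (z i / q i) = β * (q i * f (z i / q i)) := by ring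
    rw [h4, h5] at h2
    linarith
  have key_le : ∀ i ∈ S, ∀ t : ℝ, 0 ≤ t →
      (r i - rh) * t - β * (q i * f (t / q i)) ≤
        (r i - rh) * z i - β * (q i * f (z i / q i)) := by
    intro i hi t ht
    rcases eq_or_ne t (z i) with h | h
    · rw [h]
    · exact (key i hi t ht h).le
  -- decomposition of the objective
  have decomp : ∀ p' : Fin n → ℝ, (∑ i, p' i) = 1 →
      pobj n S r q β f p' =
        (∑ i ∈ S, ((r i - rh) * p' i - β * (q i * f (p' i / q i))))
          + (∑ i ∈ Sᶜ, (r i - rh) * p' i) + rh := by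
    intro p' hsum
    have h1 : ∑ i, r i * p' i =
        (∑ i ∈ S, (r i - rh) * p' i) + (∑ i ∈ Sᶜ, (r i - rh) * p' i) + rh := by
      calc ∑ i, r i * p' i = ∑ i, ((r i - rh) * p' i + rh * p' i) :=
            Finset.sum_congr rfl (fun i _ => by ring)
        _ = (∑ i, (r i - rh) * p' i) + rh * ∑ i, p' i := by
            rw [Finset.sum_add_distrib, Finset.mul_sum]
        _ = (∑ i, (r i - rh) * p' i) + rh := by rw [hsum, mul_one]
        _ = _ := by rw [← Finset.sum_add_sum_compl S (fun i => (r i - rh) * p' i)]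
    have h2 : β * ∑ i ∈ S, q i * f (p' i / q i)
        = ∑ i ∈ S, β * (q i * f (p' i / q i)) := Finset.mul_sum _ _ _
    unfold pobj
    rw [h1, Finset.sum_sub_distrib]
    linarith
  set V := (∑ i ∈ S, ((r i - rh) * z i - β * (q i * f (z i / q i)))) + rh with hV_def
  have hub : ∀ p' ∈ simplex n, pobj n S r q β f p' ≤ V := by
    intro p' hp'
    rw [decomp p' hp'.2, hV_def]
    have hA := Finset.sum_le_sum (fun i hi => key_le i hi (p' i) (hp'.1 i))
    have hB : ∑ i ∈ Sᶜ, (r i - rh) * p' i ≤ 0 :=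
      Finset.sum_nonpos fun i hi =>
        mul_nonpos_of_nonpos_of_nonneg (by linarith [hle_rh i hi]) (hp'.1 i)
    linarith
  have val_of_cond : ∀ p' ∈ simplex n, (∀ i ∈ S, p' i = z i) →
      (∀ i ∉ S, r i < rh → p' i = 0) → pobj n S r q β f p' = V := by
    intro p' hp' h1 h2
    rw [decomp p' hp'.2, hV_def]
    have hA : ∑ i ∈ S, ((r i - rh) * p' i - β * (q i * f (p' i / q i)))
        = ∑ i ∈ S, ((r i - rh) * z i - β * (q i * f (z i / q i))) :=
      Finset.sum_congr rfl fun i hi => by rw [h1 i hi]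
    have hB : ∑ i ∈ Sᶜ, (r i - rh) * p' i = 0 :=
      Finset.sum_eq_zero fun i hi => by
        rcases eq_or_lt_of_le (hle_rh i hi) with h | h
        · rw [h, sub_self, zero_mul]
        · rw [h2 i (Finset.mem_compl.1 hi) h, mul_zero]
    rw [hA, hB, add_zero]
  have cond_of_val : ∀ p' ∈ simplex n, pobj n S r q β f p' = V →
      (∀ i ∈ S, p' i = z i) ∧ (∀ i ∉ S, r i < rh → p' i = 0) := by
    intro p' hp' hval
    rw [decomp p' hp'.2, hV_def] at hval
    have hA := Finset.sum_le_sum (fun i hi => key_le i hi (p' i) (hp'.1 i))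
    have hB : ∑ i ∈ Sᶜ, (r i - rh) * p' i ≤ 0 :=
      Finset.sum_nonpos fun i hi =>
        mul_nonpos_of_nonpos_of_nonneg (by linarith [hle_rh i hi]) (hp'.1 i)
    have hAeq : ∑ i ∈ S, ((r i - rh) * p' i - β * (q i * f (p' i / q i)))
        = ∑ i ∈ S, ((r i - rh) * z i - β * (q i * f (z i / q i))) := by linarith
    have hBeq : ∑ i ∈ Sᶜ, (r i - rh) * p' i = 0 := by linarith
    constructor
    · intro i hi
      by_contra hne
      have hlt := Finset.sum_lt_sum
        (fun j hj => key_le j hj (p' j) (hp'.1 j))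
        ⟨i, hi, key i hi (p' i) (hp'.1 i) hne⟩
      linarith
    · intro i hiS hlt
      have h0 : ∀ j ∈ Sᶜ, 0 ≤ (rh - r j) * p' j := fun j hj =>
        mul_nonneg (by linarith [hle_rh j hj]) (hp'.1 j)
      have hsum0 : ∑ j ∈ Sᶜ, (rh - r j) * p' j = 0 := by
        have he : ∑ j ∈ Sᶜ, (rh - r j) * p' j
            = - ∑ j ∈ Sᶜ, (r j - rh) * p' j := by
          rw [← Finset.sum_neg_distrib]
          exact Finset.sum_congr rfl fun j _ => by ring
        rw [he, hBeq, neg_zero]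
      have := (Finset.sum_eq_zero_iff_of_nonneg h0).1 hsum0 i (Finset.mem_compl.2 hiS)
      rcases mul_eq_zero.1 this with h | h
      · linarith
      · exact h
  -- the candidate maximizer
  obtain ⟨j, hjmem, hjval⟩ := Finset.exists_mem_eq_sup' hSc r
  rw [← hrh_def] at hjval
  have hjS : j ∉ S := Finset.mem_compl.1 hjmem
  let ps : Fin n → ℝ := fun i => if i ∈ S then z i else if i = j then 1 - ∑ k ∈ S, z k else 0
  have hps_mem : ps ∈ simplex n := by
    constructor
    · intro i
      by_cases h : i ∈ S
      · simp only [ps, if_pos h]; exact (hz_pos i).le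
      · by_cases h' : i = j
        · simp only [ps, if_neg h, if_pos h']; linarith
        · simp [ps, h, h']
    · have hsplit : ∑ i, ps i = ∑ i ∈ S, ps i + ∑ i ∈ Sᶜ, ps i :=
        (Finset.sum_add_sum_compl S ps).symm
      rw [hsplit]
      have h1 : ∑ i ∈ S, ps i = ∑ i ∈ S, z i :=
        Finset.sum_congr rfl fun i hi => by simp [ps, hi]
      have h2 : ∑ i ∈ Sᶜ, ps i = 1 - ∑ k ∈ S, z k := by
        rw [Finset.sum_eq_single_of_mem j hjmem
          (fun i hi hne => by simp [ps, Finset.mem_compl.1 hi, hne])]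
        simp [ps, hjS]
      rw [h1, h2]; ring
  have hps_cond2 : ∀ i ∉ S, r i < rh → ps i = 0 := by
    intro i hi hlt
    have hij : i ≠ j := by rintro rfl; rw [hjval] at hlt; exact lt_irrefl _ hlt
    simp [ps, hi, hij]
  have hpsval : pobj n S r q β f ps = V :=
    val_of_cond ps hps_mem (fun i hi => by simp [ps, hi]) hps_cond2
  constructor
  · intro hmax
    have h1 : pobj n S r q β f p = V :=
      le_antisymm (hub p hp) (hpsval ▸ hmax ps hps_mem)
    obtain ⟨c1, c2⟩ := cond_of_val p hp h1
    refine ⟨c1, c2, ?_⟩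
    have hfil : ∑ i ∈ Sᶜ.filter (fun i => r i = rh), p i = ∑ i ∈ Sᶜ, p i := by
      apply Finset.sum_filter_of_ne
      intro i hi hne
      by_contra hr
      exact hne (c2 i (Finset.mem_compl.1 hi) (lt_of_le_of_ne (hle_rh i hi) hr))
    rw [hfil]
    have hall : ∑ i ∈ S, p i + ∑ i ∈ Sᶜ, p i = 1 := by
      rw [Finset.sum_add_sum_compl]; exact hp.2
    have hS1 : ∑ i ∈ S, p i = ∑ i ∈ S, z i :=
      Finset.sum_congr rfl fun i hi => c1 i hi
    linarith
  · rintro ⟨c1, c2, _c3⟩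
    intro p' hp'
    rw [val_of_cond p hp c1 c2]
    exact hub p' hp'
end

section
/- Let f : [0,∞) → ℝ be convex, continuous on [0,∞), and differentiable on (0,∞), and assume f' : (0,∞) → ℝ is a strictly increasing bijection onto ℝ, with inverse (f')⁻¹ : ℝ → (0,∞). Fix n ≥ 2, a strict subset S ⊊ {1,…,n} (S nonempty), r ∈ ℝⁿ, q ∈ Δⁿ with qᵢ > 0 for all i, and β > 0. Set r̂ = max_{i∉S} rᵢ and zᵢ = qᵢ (f')⁻¹((rᵢ − r̂)/β) for i ∈ S, and suppose Σ_{i∈S} zᵢ ≥ 1. Then there exists μ ∈ ℝ with Σ_{i∈S} qᵢ (f')⁻¹((rᵢ + μ)/β) = 1, and for any such μ, the vector p* ∈ Δⁿ defined by p*ᵢ = qᵢ (f')⁻¹((rᵢ + μ)/β) for i ∈ S and p*ᵢ = 0 for i ∉ S is the unique maximizer of h(p) = Σᵢ rᵢ pᵢ − β Σ_{i∈S} qᵢ f(pᵢ/qᵢ) over Δⁿ. -/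
open Finset

lemma tangent_lt (f : ℝ → ℝ)
    (hf_cont : ContinuousOn f (Set.Ici 0))
    (hf_diff : ∀ t ∈ Set.Ioi (0 : ℝ), DifferentiableAt ℝ f t)
    (hmono : StrictMonoOn (deriv f) (Set.Ioi 0))
    {x₀ x : ℝ} (hx₀ : 0 < x₀) (hx : 0 ≤ x) (hne : x ≠ x₀) :
    f x₀ + deriv f x₀ * (x - x₀) < f x := by
  rcases hne.lt_or_gt with h | h
  · obtain ⟨c, hc, hc'⟩ := exists_hasDerivAt_eq_slope f (deriv f) h
      (hf_cont.mono (by intro t ht; exact le_trans hx ht.1))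
      (fun t ht => (hf_diff t (lt_of_le_of_lt hx ht.1)).hasDerivAt)
    have hc0 : (0:ℝ) < c := lt_of_le_of_lt hx hc.1
    have hlt : deriv f c < deriv f x₀ := hmono hc0 hx₀ hc.2
    have heq : deriv f c * (x₀ - x) = f x₀ - f x :=
      (eq_div_iff (sub_ne_zero.2 h.ne')).1 hc' 
    nlinarith
  · obtain ⟨c, hc, hc'⟩ := exists_hasDerivAt_eq_slope f (deriv f) h
      (hf_cont.mono (by intro t ht; exact le_trans hx₀.le ht.1))
      (fun t ht => (hf_diff t (lt_trans hx₀ ht.1)).hasDerivAt)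
    have hlt : deriv f x₀ < deriv f c := hmono hx₀ (lt_trans hx₀ hc.1) hc.1
    have heq : deriv f c * (x - x₀) = f x - f x₀ :=
      (eq_div_iff (sub_ne_zero.2 h.ne')).1 hc' 
    nlinarith

lemma tangent_le (f : ℝ → ℝ)
    (hf_cont : ContinuousOn f (Set.Ici 0))
    (hf_diff : ∀ t ∈ Set.Ioi (0 : ℝ), DifferentiableAt ℝ f t)
    (hmono : StrictMonoOn (deriv f) (Set.Ioi 0))
    {x₀ x : ℝ} (hx₀ : 0 < x₀) (hx : 0 ≤ x) :
    f x₀ + deriv f x₀ * (x - x₀) ≤ f x := by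
  rcases eq_or_ne x x₀ with h | h
  · simp [h]
  · exact (tangent_lt f hf_cont hf_diff hmono hx₀ hx h).le

/-- optimal solutions of the partial-sum problem, second case:
for convex `f` whose derivative is a strictly increasing bijection from `(0,∞)`
onto `ℝ` with inverse `finv`, setting `r̂ = max_{i∉S} rᵢ` and
`zᵢ = qᵢ (f')⁻¹((rᵢ − r̂)/β)`, if `Σ_{i∈S} zᵢ ≥ 1` then there is `μ ∈ ℝ` with
`Σ_{i∈S} qᵢ (f')⁻¹((rᵢ + μ)/β) = 1`, and for any such `μ` the vector `p*` with
`p*ᵢ = qᵢ (f')⁻¹((rᵢ + μ)/β)` on `S` and `p*ᵢ = 0` off `S` is the unique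
maximizer of `h` over the simplex. -/
theorem stmt11 (f : ℝ → ℝ)
    (hconv : ConvexOn ℝ (Set.Ici 0) f)
    (hf_cont : ContinuousOn f (Set.Ici 0))
    (hf_diff : ∀ t ∈ Set.Ioi (0 : ℝ), DifferentiableAt ℝ f t)
    (hmono : StrictMonoOn (deriv f) (Set.Ioi 0))
    (finv : ℝ → ℝ)
    (hfinv_pos : ∀ y : ℝ, 0 < finv y)
    (hfinv_right : ∀ y : ℝ, deriv f (finv y) = y)
    (hfinv_left : ∀ t : ℝ, 0 < t → finv (deriv f t) = t)
    (n : ℕ) (hn : 2 ≤ n) (S : Finset (Fin n)) (hS : S ⊂ Finset.univ)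
    (hSne : S.Nonempty)
    (hSc : (Sᶜ : Finset (Fin n)).Nonempty)
    (r q : Fin n → ℝ)
    (hq : q ∈ simplex n) (hq_pos : ∀ i, 0 < q i)
    (β : ℝ) (hβ : 0 < β)
    (hz : 1 ≤ ∑ i ∈ S, q i * finv ((r i - (Sᶜ : Finset (Fin n)).sup' hSc r) / β)) :
    (∃ μ : ℝ, ∑ i ∈ S, q i * finv ((r i + μ) / β) = 1) ∧
    ∀ μ : ℝ, (∑ i ∈ S, q i * finv ((r i + μ) / β) = 1) →
      (fun i : Fin n => if i ∈ S then q i * finv ((r i + μ) / β) else 0) ∈ simplex n ∧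
      (∀ p' ∈ simplex n, pobj n S r q β f p' ≤
        pobj n S r q β f (fun i : Fin n => if i ∈ S then q i * finv ((r i + μ) / β) else 0)) ∧
      (∀ p ∈ simplex n, (∀ p' ∈ simplex n, pobj n S r q β f p' ≤ pobj n S r q β f p) →
        p = (fun i : Fin n => if i ∈ S then q i * finv ((r i + μ) / β) else 0)) := by
  classical
  set R : ℝ := (Sᶜ : Finset (Fin n)).sup' hSc r with hR
  -- finv is strictly monotone
  have hfinv_mono : StrictMono finv := by
    intro a b hab
    by_contra hcon
    push_neg at hcon
    have h1 : deriv f (finv b) ≤ deriv f (finv a) := by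
      rcases hcon.lt_or_eq with h' | h'
      · exact (hmono (Set.mem_Ioi.2 (hfinv_pos b)) (Set.mem_Ioi.2 (hfinv_pos a)) h').le
      · rw [h']
    rw [hfinv_right, hfinv_right] at h1
    linarith
  -- finv is continuous
  have hfinv_cont : Continuous finv := by
    rw [continuous_iff_continuousAt]
    intro a
    apply StrictMonoOn.continuousAt_of_image_mem_nhds (hfinv_mono.strictMonoOn Set.univ)
      Filter.univ_mem
    rw [Set.image_univ]
    have hsub : Set.Ioi (0:ℝ) ⊆ Set.range finv := fun t ht =>
      ⟨deriv f t, hfinv_left t ht⟩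
    exact Filter.mem_of_superset (Ioi_mem_nhds (hfinv_pos a)) hsub
  set g : ℝ → ℝ := fun μ => ∑ i ∈ S, q i * finv ((r i + μ) / β) with hg
  have hg_cont : Continuous g := by
    apply continuous_finset_sum
    intro i _
    exact continuous_const.mul (hfinv_cont.comp (by fun_prop))
  have hg_mono : Monotone g := by
    intro a b hab
    apply Finset.sum_le_sum
    intro i _
    apply mul_le_mul_of_nonneg_left _ (hq_pos i).le
    apply hfinv_mono.monotone
    gcongr
  -- existence of μ
  have hgR : 1 ≤ g (-R) := by
    have : g (-R) = ∑ i ∈ S, q i * finv ((r i - R) / β) := by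
      apply Finset.sum_congr rfl
      intro i _
      ring_nf
    rw [this]
    exact hz
  set μ₀ : ℝ := S.inf' hSne (fun i => β * deriv f 1 - r i) with hμ₀
  have hg0 : g μ₀ ≤ 1 := by
    have h1 : g μ₀ ≤ ∑ i ∈ S, q i := by
      apply Finset.sum_le_sum
      intro i hi
      have h2 : μ₀ ≤ β * deriv f 1 - r i := Finset.inf'_le _ hi
      have h3 : (r i + μ₀) / β ≤ deriv f 1 := by
        rw [div_le_iff₀ hβ]
        nlinarith
      have h4 : finv ((r i + μ₀) / β) ≤ 1 := by
        calc finv ((r i + μ₀) / β) ≤ finv (deriv f 1) := hfinv_mono.monotone h3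
        _ = 1 := hfinv_left 1 one_pos
      nlinarith [hq_pos i, hfinv_pos ((r i + μ₀) / β)]
    have h5 : ∑ i ∈ S, q i ≤ ∑ i, q i :=
      Finset.sum_le_sum_of_subset_of_nonneg (Finset.subset_univ S)
        (fun i _ _ => (hq_pos i).le)
    calc g μ₀ ≤ ∑ i ∈ S, q i := h1
    _ ≤ ∑ i, q i := h5
    _ = 1 := hq.2
  have hex : ∃ μ : ℝ, g μ = 1 := by
    rcases le_or_gt μ₀ (-R) with h | h
    · have h1 : (1:ℝ) ∈ Set.Icc (g μ₀) (g (-R)) := ⟨hg0, hgR⟩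
      obtain ⟨μ, _, hμ⟩ := intermediate_value_Icc h hg_cont.continuousOn h1
      exact ⟨μ, hμ⟩
    · exact ⟨-R, le_antisymm (le_trans (hg_mono h.le) hg0) hgR⟩
  refine ⟨hex, ?_⟩
  intro μ hμ
  set ps : Fin n → ℝ := fun i => if i ∈ S then q i * finv ((r i + μ) / β) else 0 with hps
  -- μ ≤ -R
  have hμR : μ ≤ -R := by
    by_contra hcon
    push_neg at hcon
    have hlt : g (-R) < g μ := by
      apply Finset.sum_lt_sum_of_nonempty hSne
      intro i _
      apply mul_lt_mul_of_pos_left _ (hq_pos i)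
      apply hfinv_mono
      gcongr
    have h2 : g μ = 1 := hμ
    rw [h2] at hlt
    linarith
  have hqne : ∀ i, q i ≠ 0 := fun i => (hq_pos i).ne'
  have hpsS : ∀ i ∈ S, ps i = q i * finv ((r i + μ) / β) := fun i hi => by
    simp [hps, hi]
  have hpsSc : ∀ i ∉ S, ps i = 0 := fun i hi => by simp [hps, hi]
  have hSps : ∑ i ∈ S, ps i = 1 := by
    rw [Finset.sum_congr rfl hpsS]; exact hμ
  have hps_mem : ps ∈ simplex n := by
    constructor
    · intro i
      by_cases hi : i ∈ S
      · rw [hpsS i hi]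
        exact le_of_lt (mul_pos (hq_pos i) (hfinv_pos _))
      · rw [hpsSc i hi]
    · rw [← Finset.sum_add_sum_compl S ps, hSps,
        Finset.sum_eq_zero (fun i hi => hpsSc i (Finset.mem_compl.1 hi))]
      ring
  -- core inequality
  have key : ∀ p : Fin n → ℝ, p ∈ simplex n →
      pobj n S r q β f p ≤ pobj n S r q β f ps ∧
      ((∃ j ∈ S, p j ≠ ps j) → pobj n S r q β f p < pobj n S r q β f ps) := by
    intro p hp
    obtain ⟨hp0, hp1⟩ := hp
    have hx0 : ∀ i ∈ S, ps i / q i = finv ((r i + μ) / β) := by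
      intro i hi
      rw [hpsS i hi, mul_div_cancel_left₀ _ (hqne i)]
    have hterm : ∀ i ∈ S,
        q i * f (ps i / q i) + ((r i + μ) / β) * (p i - ps i) ≤ q i * f (p i / q i) := by
      intro i hi
      have ht := tangent_le f hf_cont hf_diff hmono
        (x₀ := finv ((r i + μ) / β)) (x := p i / q i) (hfinv_pos _)
        (div_nonneg (hp0 i) (hq_pos i).le)
      rw [hfinv_right, ← hx0 i hi] at ht
      have hm := mul_le_mul_of_nonneg_left ht (hq_pos i).le
      have hfd : q i * (p i / q i - ps i / q i) = p i - ps i := by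
        field_simp [hqne i]
      have hexp : q i * (f (ps i / q i) + (r i + μ) / β * (p i / q i - ps i / q i))
          = q i * f (ps i / q i) + (r i + μ) / β * (p i - ps i) := by
        rw [mul_add, mul_left_comm, hfd]
      linarith [hm, hexp]
    have hterm_lt : ∀ i ∈ S, p i ≠ ps i →
        q i * f (ps i / q i) + ((r i + μ) / β) * (p i - ps i) < q i * f (p i / q i) := by
      intro i hi hne
      have hxne : p i / q i ≠ ps i / q i := by
        intro hcon
        exact hne (by rw [div_eq_div_iff (hqne i) (hqne i)] at hcon; exact mul_right_cancel₀ (hqne i) hcon)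
      have ht := tangent_lt f hf_cont hf_diff hmono
        (x₀ := finv ((r i + μ) / β)) (x := p i / q i) (hfinv_pos _)
        (div_nonneg (hp0 i) (hq_pos i).le) (by rw [← hx0 i hi]; exact hxne)
      rw [hfinv_right, ← hx0 i hi] at ht
      have hm := mul_lt_mul_of_pos_left ht (hq_pos i)
      have hfd : q i * (p i / q i - ps i / q i) = p i - ps i := by
        field_simp [hqne i]
      have hexp : q i * (f (ps i / q i) + (r i + μ) / β * (p i / q i - ps i / q i))
          = q i * f (ps i / q i) + (r i + μ) / β * (p i - ps i) := by
        rw [mul_add, mul_left_comm, hfd]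
      linarith [hm, hexp]
    -- shared linear algebra
    have hβE : β * ∑ i ∈ S, ((r i + μ) / β) * (p i - ps i)
        = ∑ i ∈ S, (r i + μ) * (p i - ps i) := by
      rw [Finset.mul_sum]
      exact Finset.sum_congr rfl (fun i _ => by field_simp)
    have hcompl : ∑ i ∈ S, p i + ∑ i ∈ Sᶜ, p i = 1 := by
      rw [Finset.sum_add_sum_compl]; exact hp1
    have hA : (∑ i, r i * p i) - (∑ i, r i * ps i)
        - ∑ i ∈ S, (r i + μ) * (p i - ps i) = ∑ i ∈ Sᶜ, (r i + μ) * p i := by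
      have h0 : ∑ i ∈ Sᶜ, r i * ps i = 0 := Finset.sum_eq_zero (fun i hi => by
        rw [hpsSc i (Finset.mem_compl.1 hi), mul_zero])
      rw [← Finset.sum_add_sum_compl S (fun i => r i * p i),
        ← Finset.sum_add_sum_compl S (fun i => r i * ps i), h0]
      have e3 : ∑ i ∈ S, (r i + μ) * (p i - ps i)
          = (∑ i ∈ S, r i * p i - ∑ i ∈ S, r i * ps i)
            + μ * (∑ i ∈ S, p i - ∑ i ∈ S, ps i) := by
        rw [← Finset.sum_sub_distrib, ← Finset.sum_sub_distrib, Finset.mul_sum,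
          ← Finset.sum_add_distrib]
        exact Finset.sum_congr rfl (fun i _ => by ring)
      have e5 : ∑ i ∈ Sᶜ, (r i + μ) * p i
          = ∑ i ∈ Sᶜ, r i * p i + μ * ∑ i ∈ Sᶜ, p i := by
        rw [Finset.mul_sum, ← Finset.sum_add_distrib]
        exact Finset.sum_congr rfl (fun i _ => by ring)
      have hS1 : ∑ i ∈ S, p i = 1 - ∑ i ∈ Sᶜ, p i := by linarith
      rw [e3, e5, hSps, hS1]
      ring
    have hneg : ∑ i ∈ Sᶜ, (r i + μ) * p i ≤ 0 := by
      apply Finset.sum_nonpos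
      intro i hi
      apply mul_nonpos_of_nonpos_of_nonneg _ (hp0 i)
      have : r i ≤ R := Finset.le_sup' r hi
      linarith
    constructor
    · have hsum := Finset.sum_le_sum hterm
      rw [Finset.sum_add_distrib] at hsum
      have hmul := mul_le_mul_of_nonneg_left hsum hβ.le
      rw [mul_add] at hmul
      unfold pobj
      linarith [hmul, hβE, hA, hneg]
    · rintro ⟨j, hj, hne⟩
      have hsum := Finset.sum_lt_sum hterm ⟨j, hj, hterm_lt j hj hne⟩
      rw [Finset.sum_add_distrib] at hsum
      have hmul := mul_lt_mul_of_pos_left hsum hβ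
      rw [mul_add] at hmul
      unfold pobj
      linarith [hmul, hβE, hA, hneg]
  refine ⟨hps_mem, fun p' hp' => (key p' hp').1, ?_⟩
  intro p hp hopt
  have hSeq : ∀ j ∈ S, p j = ps j := by
    intro j hj
    by_contra hne
    have hlt := (key p hp).2 ⟨j, hj, hne⟩
    have hge := hopt ps hps_mem
    linarith
  have hsc0 : ∑ i ∈ Sᶜ, p i = 0 := by
    have hc : ∑ i ∈ S, p i + ∑ i ∈ Sᶜ, p i = ∑ i, p i := Finset.sum_add_sum_compl S p
    have h1 : ∑ i ∈ S, p i = 1 := by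
      rw [Finset.sum_congr rfl hSeq]; exact hSps
    rw [hp.2] at hc
    linarith
  funext i
  by_cases hi : i ∈ S
  · exact hSeq i hi
  · have h0 := (Finset.sum_eq_zero_iff_of_nonneg (fun j _ => hp.1 j)).1 hsc0 i
      (Finset.mem_compl.2 hi)
    rw [h0, hpsSc i hi]
end

section
/- The function f(t) = (1/2)(log t)² on (0,∞) satisfies: (i) f'(t) = (log t)/t for all t > 0, and lim_{t→0⁺} f'(t) = −∞; (ii) t = 1 is the unique global minimizer of f on (0,∞), with f(1) = 0 and f(t) > 0 for all t > 0 with t ≠ 1; (iii) f is not convex on (0,∞). Hence f is both DPO-inducing (lim_{t→0⁺} f'(t) = −∞) and displacement-resistant (its global minimizer is ≥ 1), yet non-convex. -/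
open Filter

/-- the function `f(t) = (1/2)(log t)²` satisfies:
(i) `f'(t) = (log t)/t` for `t > 0` and `lim_{t→0⁺} f'(t) = −∞` (DPO-inducing);
(ii) `t = 1` is its unique global minimizer on `(0,∞)`, with `f(1) = 0` and
`f(t) > 0` for `t > 0`, `t ≠ 1` (displacement-resistant);
(iii) `f` is not convex on `(0,∞)`. -/
theorem stmt12 :
    (∀ t : ℝ, 0 < t →
      HasDerivAt (fun s : ℝ => (Real.log s) ^ 2 / 2) (Real.log t / t) t) ∧
    Tendsto (fun t : ℝ => Real.log t / t) (nhdsWithin 0 (Set.Ioi 0)) atBot ∧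
    ((Real.log 1) ^ 2 / 2 = 0) ∧
    (∀ t : ℝ, 0 < t → t ≠ 1 → 0 < (Real.log t) ^ 2 / 2) ∧
    ¬ ConvexOn ℝ (Set.Ioi 0) (fun t : ℝ => (Real.log t) ^ 2 / 2) := by
  refine ⟨?_, ?_, by simp, ?_, ?_⟩
  · intro t ht
    have h := ((Real.hasDerivAt_log (ne_of_gt ht)).pow 2).div_const 2
    convert h using 1
    any_goals rfl
    field_simp
    ring
  · have h1 : Tendsto Real.log (nhdsWithin 0 (Set.Ioi 0)) atBot :=
      Real.tendsto_log_nhdsGT_zero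
    have h2 : Tendsto (fun t : ℝ => t⁻¹) (nhdsWithin 0 (Set.Ioi 0)) atTop :=
      tendsto_inv_nhdsGT_zero
    simpa [div_eq_mul_inv] using h1.atBot_mul_atTop₀ h2
  · intro t ht hne
    have : Real.log t ≠ 0 := Real.log_ne_zero_of_pos_of_ne_one ht hne
    positivity
  · intro hc
    have h1 : (1:ℝ) ∈ Set.Ioi (0:ℝ) := by norm_num
    have h32 : (32:ℝ) ∈ Set.Ioi (0:ℝ) := by norm_num
    have h := hc.2 h1 h32 (by norm_num : (0:ℝ) ≤ 30/31) (by norm_num : (0:ℝ) ≤ 1/31)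
      (by norm_num)
    have e32 : Real.log 32 = 5 * Real.log 2 := by
      rw [show (32:ℝ) = 2 ^ 5 by norm_num, Real.log_pow]; push_cast; ring
    have e2 : (30/31 : ℝ) • (1:ℝ) + (1/31 : ℝ) • (32:ℝ) = 2 := by norm_num
    rw [e2] at h
    simp only [smul_eq_mul, Real.log_one, e32] at h
    have hl2 : 0 < Real.log 2 := Real.log_pos (by norm_num)
    nlinarith [sq_nonneg (Real.log 2), hl2]
end
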